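/- arXiv:2106.06246 — 6 statements merged into one kernel-verified Lean document; each statement's English description precedes it below -/
import Mathlib

section
/- Let n be a positive integer, let B be an invertible real symmetric 2n×2n matrix, and let Ω be an invertible real skew-symmetric 2n×2n matrix. If Ω·B is spectrally stable, then the Morse index of B is even. -/
open Matrix Polynomial

noncomputable section

/-- The standard symplectic matrix `J = [[0, -Iₙ], [Iₙ, 0]]`. -/
def Jmat (n : ℕ) : Matrix (Fin n ⊕ Fin n) (Fin n ⊕ Fin n) ℝ :=
  Matrix.fromBlocks 0 (-1) 1 0

/-- A real matrix regarded as a complex matrix. -/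
def mapC {m : Type*} [Fintype m] [DecidableEq m] (M : Matrix m m ℝ) : Matrix m m ℂ :=
  M.map (algebraMap ℝ ℂ)

/-- `M` is spectrally stable if every complex eigenvalue of `M` is purely imaginary. -/
def spectrallyStable {m : Type*} [Fintype m] [DecidableEq m] (M : Matrix m m ℝ) : Prop :=
  ∀ z ∈ spectrum ℂ (mapC M), z.re = 0

/-- `M` is semisimple if it is diagonalizable over `ℂ`. -/
def semisimpleC {m : Type*} [Fintype m] [DecidableEq m] (M : Matrix m m ℝ) : Prop :=
  ∃ P : Matrix m m ℂ, IsUnit P ∧ ∃ d : m → ℂ, mapC M = P * Matrix.diagonal d * P⁻¹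

/-- The Morse index of a real symmetric matrix: the number of negative eigenvalues,
counted with multiplicity (as roots of the characteristic polynomial). -/
def morseIndex {m : Type*} [Fintype m] [DecidableEq m] (B : Matrix m m ℝ) : ℕ :=
  ((B.charpoly.roots).filter (fun x => x < 0)).card

/-- The nullity of a real matrix: the dimension of its kernel. -/
def nullity {m : Type*} [Fintype m] [DecidableEq m] (B : Matrix m m ℝ) : ℕ :=
  Module.finrank ℝ (LinearMap.ker B.mulVecLin)

section Aux

variable {m : Type*} [Fintype m] [DecidableEq m]

lemma eval_charpoly' {K : Type*} [CommRing K] (M : Matrix m m K) (z : K) :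
    M.charpoly.eval z = (Matrix.scalar m z - M).det := by
  rw [Matrix.charpoly, _root_.eval_det, Matrix.matPolyEquiv_charmatrix]
  rw [Polynomial.eval_sub, Polynomial.eval_X, Polynomial.eval_C]

lemma mem_spectrum_iff_root {K : Type*} [Field K] (M : Matrix m m K) (z : K) :
    z ∈ spectrum K M ↔ M.charpoly.IsRoot z := by
  have halg : algebraMap K (Matrix m m K) z = Matrix.scalar m z := rfl
  rw [spectrum.mem_iff, Polynomial.IsRoot, eval_charpoly', halg]
  constructor
  · intro h
    by_contra hd
    exact h ((Matrix.isUnit_iff_isUnit_det _).mpr (isUnit_iff_ne_zero.mpr hd))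
  · intro h hu
    have hu' := (Matrix.isUnit_iff_isUnit_det _).mp hu
    rw [h] at hu'
    exact not_isUnit_zero hu'

/-- The product of a star-stable multiset of nonzero purely imaginary numbers is a
positive real. -/
lemma prod_pos_of_imaginary (S : Multiset ℂ)
    (hstar : S.map (starRingEnd ℂ) = S)
    (hz : ∀ z ∈ S, z ≠ 0 ∧ z.re = 0) :
    ∃ r : ℝ, 0 < r ∧ S.prod = (r : ℂ) := by
  induction S using Multiset.strongInductionOn with
  | ih S ih =>
  rcases eq_or_ne S 0 with rfl | hS
  · exact ⟨1, one_pos, by simp⟩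
  · obtain ⟨a, ha⟩ := Multiset.exists_mem_of_ne_zero hS
    obtain ⟨ha0, haim⟩ := hz a ha
    have hstara : (starRingEnd ℂ) a = -a := by
      apply Complex.ext <;> simp [haim]
    have hneq : -a ≠ a := by
      intro hh
      apply ha0
      have h2 : a + a = 0 := by linear_combination (-1 : ℂ) * hh
      exact add_self_eq_zero.mp h2
    have hmem : -a ∈ S.erase a := by
      rw [Multiset.mem_erase_of_ne hneq, ← hstar, ← hstara]
      exact Multiset.mem_map_of_mem _ ha
    set T := (S.erase a).erase (-a) with hT
    have hST : S = a ::ₘ (-a) ::ₘ T := by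
      rw [hT, Multiset.cons_erase hmem, Multiset.cons_erase ha]
    have hTsub : ∀ z ∈ T, z ∈ S := fun z hzT =>
      Multiset.mem_of_mem_erase (Multiset.mem_of_mem_erase hzT)
    have hinj : Function.Injective (starRingEnd ℂ) := star_injective
    have hTstar : T.map (starRingEnd ℂ) = T := by
      rw [hT, Multiset.map_erase _ hinj, Multiset.map_erase _ hinj, hstar, hstara,
        map_neg, hstara, neg_neg, Multiset.erase_comm]
    have hTlt : T < S := by
      rw [Multiset.lt_iff_cons_le]
      exact ⟨-a, by rw [hST]; exact Multiset.le_cons_self _ _⟩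
    obtain ⟨r, hr, hprod⟩ := ih T hTlt hTstar (fun z hzT => hz z (hTsub z hzT))
    have haim0 : a.im ≠ 0 := by
      intro hh
      exact ha0 (Complex.ext haim hh)
    refine ⟨a.im ^ 2 * r, by positivity, ?_⟩
    rw [hST, Multiset.prod_cons, Multiset.prod_cons, hprod]
    have hkey : a * -a = ((a.im ^ 2 : ℝ) : ℂ) := by
      rw [Complex.ext_iff]
      constructor
      · rw [Complex.ofReal_re]
        simp [Complex.mul_re, haim]
        ring
      · rw [Complex.ofReal_im]
        simp [Complex.mul_im, haim]
    rw [← mul_assoc, hkey]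
    push_cast
    ring

/-- A real invertible spectrally stable matrix has positive determinant. -/
lemma det_pos_of_stable (M : Matrix m m ℝ) (hM : IsUnit M.det)
    (hs : spectrallyStable M) : 0 < M.det := by
  set q : Polynomial ℂ := (mapC M).charpoly with hq
  have hdetC : (mapC M).det = (M.det : ℂ) := by
    rw [mapC, show M.map ⇑(algebraMap ℝ ℂ) = (algebraMap ℝ ℂ).mapMatrix M from rfl,
      ← RingHom.map_det]
    simp
  have hq_map : q = M.charpoly.map (algebraMap ℝ ℂ) := by
    rw [hq, mapC, Matrix.charpoly_map]
  have hqstable : q.map (starRingEnd ℂ) = q := by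
    rw [hq_map, Polynomial.map_map]
    congr 1
    ext x
    simp
  have hstar : q.roots.map (starRingEnd ℂ) = q.roots := by
    calc q.roots.map (starRingEnd ℂ)
        = (q.map (starRingEnd ℂ)).roots :=
          (Polynomial.Splits.roots_map (IsAlgClosed.splits q) _).symm
      _ = q.roots := by rw [hqstable]
  have hroots : ∀ z ∈ q.roots, z ≠ 0 ∧ z.re = 0 := by
    intro z hzr
    have hroot : q.IsRoot z := Polynomial.isRoot_of_mem_roots hzr
    constructor
    · rintro rfl
      rw [Polynomial.IsRoot, eval_charpoly'] at hroot
      have h0 : (Matrix.scalar m (0 : ℂ) - mapC M) = -(mapC M) := by simp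
      rw [h0, Matrix.det_neg] at hroot
      rcases mul_eq_zero.mp hroot with h1 | h1
      · exact absurd h1 (by simp)
      · rw [hdetC] at h1
        exact hM.ne_zero (by exact_mod_cast h1)
    · exact hs z ((mem_spectrum_iff_root _ _).mpr hroot)
  obtain ⟨r, hr, hprod⟩ := prod_pos_of_imaginary q.roots hstar hroots
  have h1 : (M.det : ℂ) = (r : ℂ) := by
    rw [← hdetC, Matrix.det_eq_prod_roots_charpoly, ← hq, hprod]
  have h2 : M.det = r := by exact_mod_cast h1
  rw [h2]; exact hr

/-- A real skew-symmetric matrix is spectrally stable. -/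
lemma skew_spectrallyStable (Ω : Matrix m m ℝ) (hskew : Ωᵀ = -Ω) :
    spectrallyStable Ω := by
  intro z hz
  set A := mapC Ω with hA
  have hAH : Aᴴ = -A := by
    ext i j
    have h2 := congrFun (congrFun hskew j) i
    simp only [Matrix.transpose_apply, Matrix.neg_apply] at h2
    simp [hA, mapC, Matrix.conjTranspose_apply, h2]
  rw [mem_spectrum_iff_root, Polynomial.IsRoot, eval_charpoly'] at hz
  obtain ⟨v, hv0, hv⟩ := (Matrix.exists_mulVec_eq_zero_iff).mpr hz
  have hAv : A *ᵥ v = z • v := by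
    have h1 : Matrix.scalar m z *ᵥ v - A *ᵥ v = 0 := by
      rw [← Matrix.sub_mulVec]; exact hv
    have h2 : Matrix.scalar m z *ᵥ v = z • v := by
      ext i; simp [Matrix.scalar, Matrix.mulVec_diagonal]
    rw [h2] at h1
    exact (sub_eq_zero.mp h1).symm
  set t : ℝ := ∑ i, Complex.normSq (v i) with ht
  have htpos : 0 < t := by
    obtain ⟨i, hi⟩ := Function.ne_iff.mp hv0
    refine Finset.sum_pos' (fun j _ => Complex.normSq_nonneg _)
      ⟨i, Finset.mem_univ i, ?_⟩
    exact Complex.normSq_pos.mpr hi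
  have hdot : star v ⬝ᵥ v = (t : ℂ) := by
    rw [ht]
    push_cast
    simp only [dotProduct, Pi.star_apply]
    refine Finset.sum_congr rfl fun i _ => ?_
    rw [RCLike.star_def, mul_comm, Complex.mul_conj]
  set c := star v ⬝ᵥ (A *ᵥ v) with hc
  have hc1 : c = z * (t : ℂ) := by
    rw [hc, hAv, dotProduct_smul, hdot, smul_eq_mul]
  have hc2 : star c = -c := by
    rw [hc]
    calc star (star v ⬝ᵥ (A *ᵥ v)) = star (A *ᵥ v) ⬝ᵥ v := by
          rw [Matrix.star_dotProduct, star_star]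
      _ = (star v ᵥ* Aᴴ) ⬝ᵥ v := by rw [Matrix.star_mulVec]
      _ = star v ⬝ᵥ (Aᴴ *ᵥ v) := (Matrix.dotProduct_mulVec _ _ _).symm
      _ = -(star v ⬝ᵥ (A *ᵥ v)) := by
          rw [hAH, Matrix.neg_mulVec, dotProduct_neg]
  have hcre : c.re = 0 := by
    have h3 := congrArg Complex.re hc2
    simp only [Complex.neg_re] at h3
    have h4 : (star c).re = c.re := Complex.conj_re c
    rw [h4] at h3
    linarith
  rw [hc1] at hcre
  have h5 : z.re * t = 0 := by
    simpa [Complex.mul_re] using hcre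
  rcases mul_eq_zero.mp h5 with h6 | h6
  · exact h6
  · exact absurd h6 (ne_of_gt htpos)

/-- Parity of the number of negative elements in a multiset of nonzero reals. -/
lemma even_card_neg_of_prod_pos (s : Multiset ℝ) :
    (∀ x ∈ s, x ≠ 0) →
    (0 < s.prod ↔ Even ((s.filter (fun x => x < 0)).card)) := by
  induction s using Multiset.induction with
  | empty => simp
  | cons a t ih =>
    intro h0
    have ha := h0 a (Multiset.mem_cons_self a t)
    have h0t : ∀ x ∈ t, x ≠ 0 := fun x hx => h0 x (Multiset.mem_cons_of_mem hx)
    have hpt : t.prod ≠ 0 := Multiset.prod_ne_zero (fun h => (h0t 0 h) rfl)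
    rw [Multiset.prod_cons, Multiset.filter_cons]
    rcases lt_trichotomy a 0 with hlt | heq | hgt
    · rw [if_pos hlt]
      have h1 : 0 < a * t.prod ↔ t.prod < 0 := by
        constructor
        · intro h
          rcases mul_pos_iff.mp h with ⟨h2, _⟩ | ⟨_, h3⟩
          · exact absurd h2 (not_lt.mpr hlt.le)
          · exact h3
        · intro h; exact mul_pos_of_neg_of_neg hlt h
      have h2 : t.prod < 0 ↔ ¬(0 < t.prod) := by
        constructor
        · intro h; exact not_lt.mpr h.le
        · intro h; exact (not_lt.mp h).lt_of_ne hpt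
      rw [h1, h2, ih h0t, Multiset.card_add, Multiset.card_singleton, add_comm,
        Nat.even_add_one]
    · exact absurd heq ha
    · rw [if_neg (not_lt.mpr hgt.le)]
      have h1 : 0 < a * t.prod ↔ 0 < t.prod := by
        constructor
        · intro h
          rcases mul_pos_iff.mp h with ⟨_, h3⟩ | ⟨h2, _⟩
          · exact h3
          · exact absurd h2 (not_lt.mpr hgt.le)
        · intro h; exact mul_pos hgt h
      rw [zero_add, h1, ih h0t]

/-- Conjugation invariance of the characteristic polynomial. -/
lemma charpoly_conj {K : Type*} [CommRing K] (P Q A : Matrix m m K)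
    (h1 : P * Q = 1) : (P * A * Q).charpoly = A.charpoly := by
  set f := (Polynomial.C : K →+* K[X]).mapMatrix (m := m) with hf
  have hch : ∀ M : Matrix m m K, charmatrix M = Matrix.scalar m (X : K[X]) - f M :=
    fun M => rfl
  have hcomm : ∀ M : Matrix m m K[X],
      M * Matrix.scalar m (X : K[X]) = Matrix.scalar m (X : K[X]) * M :=
    fun M => ((Matrix.scalar_commute (X : K[X]) (fun r => Commute.all _ _) M).symm)
  have key : charmatrix (P * A * Q) = f P * charmatrix A * f Q := by
    rw [hch, hch, mul_sub, sub_mul]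
    congr 1
    · rw [hcomm (f P), mul_assoc, ← _root_.map_mul f, h1, _root_.map_one, mul_one]
    · rw [_root_.map_mul, _root_.map_mul]
  rw [Matrix.charpoly, Matrix.charpoly, key, Matrix.det_mul, Matrix.det_mul,
    mul_right_comm, ← Matrix.det_mul, ← _root_.map_mul f, h1, _root_.map_one,
    Matrix.det_one, one_mul]

lemma charpoly_diagonal {K : Type*} [CommRing K] (d : m → K) :
    (Matrix.diagonal d).charpoly = ∏ i, (X - C (d i)) := by
  have h : charmatrix (Matrix.diagonal d) = Matrix.diagonal (fun i => X - C (d i)) := by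
    refine Matrix.ext fun i j => ?_
    by_cases hij : i = j
    · subst hij; rw [charmatrix_apply_eq]; simp
    · rw [charmatrix_apply_ne _ _ _ hij, Matrix.diagonal_apply_ne _ hij,
        Matrix.diagonal_apply_ne _ hij, map_zero, neg_zero]
  rw [Matrix.charpoly, h, Matrix.det_diagonal]

end Aux

/-- If `B` is an invertible real symmetric matrix, `Ω` is an invertible real
skew-symmetric matrix, and `Ω·B` is spectrally stable, then the Morse index of `B`
is even. -/
theorem stmt_4 (n : ℕ) (hn : 0 < n)
    (B Ω : Matrix (Fin n ⊕ Fin n) (Fin n ⊕ Fin n) ℝ)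
    (hB : B.IsSymm) (hBinv : IsUnit B.det)
    (hΩskew : Ωᵀ = -Ω) (hΩinv : IsUnit Ω.det)
    (h : spectrallyStable (Ω * B)) :
    Even (morseIndex B) := by
  classical
  have hΩpos : 0 < Ω.det := det_pos_of_stable Ω hΩinv (skew_spectrallyStable Ω hΩskew)
  have hΩBinv : IsUnit (Ω * B).det := by rw [Matrix.det_mul]; exact hΩinv.mul hBinv
  have hΩBpos : 0 < (Ω * B).det := det_pos_of_stable _ hΩBinv h
  have hBpos : 0 < B.det := by
    rw [Matrix.det_mul] at hΩBpos
    nlinarith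
  have hBh : B.IsHermitian := by
    rw [Matrix.IsHermitian, Matrix.conjTranspose_eq_transpose_of_trivial]; exact hB
  set d : (Fin n ⊕ Fin n) → ℝ := fun i => hBh.eigenvalues i with hd
  set U : Matrix (Fin n ⊕ Fin n) (Fin n ⊕ Fin n) ℝ :=
    (hBh.eigenvectorUnitary : Matrix (Fin n ⊕ Fin n) (Fin n ⊕ Fin n) ℝ) with hU
  have hspec : B = U * Matrix.diagonal d * star U := by
    have hs := hBh.spectral_theorem
    rw [Unitary.conjStarAlgAut_apply] at hs
    exact hs
  have hU1 : U * star U = 1 := by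
    have hmem := (hBh.eigenvectorUnitary).2
    exact (Matrix.mem_unitaryGroup_iff).mp hmem
  have hcp : B.charpoly = ∏ i, (X - C (d i)) := by
    conv_lhs => rw [hspec]
    rw [charpoly_conj _ _ _ hU1, _root_.charpoly_diagonal]
  set s : Multiset ℝ := Finset.univ.val.map d with hs
  have hroots : B.charpoly.roots = s := by
    rw [hcp, hs, ← Polynomial.roots_multiset_prod_X_sub_C (Finset.univ.val.map d)]
    congr 1
    rw [Multiset.map_map]
    rfl
  have hdet : B.det = s.prod := by
    rw [hBh.det_eq_prod_eigenvalues, hs, Finset.prod_eq_multiset_prod]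
    simp [hd]
  have hnz : ∀ x ∈ s, x ≠ 0 := by
    intro x hx hx0
    have h0 : s.prod = 0 := Multiset.prod_eq_zero (hx0 ▸ hx)
    rw [← hdet] at h0
    exact hBinv.ne_zero h0
  have heven := (even_card_neg_of_prod_pos s hnz).mp (by rw [← hdet]; exact hBpos)
  rw [morseIndex, hroots]
  exact heven
end
end

section
/- Let n be a positive integer, let B be a real symmetric 2n×2n matrix, let Ω be an invertible real skew-symmetric 2n×2n matrix, and suppose Ω·B is invertible and spectrally stable. Then det(Ω·B) > 0, and consequently det(B) > 0. -/
open Matrix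

noncomputable section

open Polynomial in
lemma aux_mem_spectrum_iff {m : Type*} [Fintype m] [DecidableEq m]
    {K : Type*} [Field K] (A : Matrix m m K) (z : K) :
    z ∈ spectrum K A ↔ A.charpoly.eval z = 0 := by
  rw [spectrum.mem_iff, Matrix.isUnit_iff_isUnit_det, isUnit_iff_ne_zero, not_not]
  have : (algebraMap K (Matrix m m K) z - A).det = A.charpoly.eval z := by
    rw [Matrix.charpoly, ← Polynomial.coe_evalRingHom, RingHom.map_det]
    congr 1
    ext i j
    simp [charmatrix_apply, Matrix.algebraMap_matrix_apply, Matrix.diagonal_apply,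
      Matrix.sub_apply]
    split <;> simp
  rw [this]

open Polynomial in
/-- A real matrix of even positive dimension with nonzero determinant whose
complex eigenvalues are all purely imaginary has positive determinant. -/
lemma aux_det_pos {m : Type*} [Fintype m] [DecidableEq m]
    (M : Matrix m m ℝ) (hcard : Even (Fintype.card m)) (hpos : 0 < Fintype.card m)
    (hdet : M.det ≠ 0) (hstab : ∀ z ∈ spectrum ℂ (mapC M), z.re = 0) :
    0 < M.det := by
  have : Nonempty m := Fintype.card_pos_iff.mp hpos
  set p := M.charpoly with hp
  have hmonic : p.Monic := M.charpoly_monic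
  have hdet0 : M.det = p.eval 0 := by
    rw [Matrix.det_eq_sign_charpoly_coeff, hcard.neg_one_pow, one_mul,
      Polynomial.coeff_zero_eq_eval_zero]
  have hnoroot : ∀ t : ℝ, 0 < t → p.eval t ≠ 0 := by
    intro t ht h0
    have hc : (mapC M).charpoly.eval (t : ℂ) = 0 := by
      rw [mapC, Matrix.charpoly_map]
      rw [Polynomial.eval_map]
      have : (Polynomial.eval₂ (algebraMap ℝ ℂ) (↑t : ℂ) p) = algebraMap ℝ ℂ (p.eval t) := by
        exact Polynomial.eval₂_at_apply (algebraMap ℝ ℂ) t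
      rw [this, h0, map_zero]
    have := hstab (t : ℂ) ((aux_mem_spectrum_iff _ _).mpr hc)
    simp at this
    exact ht.ne' this
  have h0 : p.eval 0 ≠ 0 := by rw [← hdet0]; exact hdet
  rw [hdet0]
  by_contra hle
  push_neg at hle
  have hneg : p.eval 0 < 0 := lt_of_le_of_ne hle h0
  have hdeg : 0 < p.degree := by
    rw [hp, Matrix.charpoly_degree_eq_dim]
    exact_mod_cast hpos
  have htend := Polynomial.tendsto_atTop_of_leadingCoeff_nonneg p hdeg
    (by rw [hmonic.leadingCoeff]; norm_num)
  obtain ⟨T, hT⟩ := (htend.eventually (Filter.eventually_gt_atTop 0)).exists_forall_of_atTop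
  set T' : ℝ := max T 1 with hT'
  have hT'pos : (0:ℝ) ≤ T' := le_trans zero_le_one (le_max_right _ _)
  have hpT' : 0 < p.eval T' := hT T' (le_max_left _ _)
  have hcont : ContinuousOn (fun t => p.eval t) (Set.Icc 0 T') := (p.continuous).continuousOn
  have := intermediate_value_Icc hT'pos hcont
  have hmem : (0:ℝ) ∈ Set.Icc (p.eval 0) (p.eval T') := ⟨hneg.le, hpT'.le⟩
  obtain ⟨c, hc, hc0⟩ := this hmem
  have hcne : c ≠ 0 := by rintro rfl; exact hneg.ne hc0
  exact hnoroot c (lt_of_le_of_ne hc.1 (Ne.symm hcne)) hc0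

/-- Real skew-symmetric matrices are spectrally stable. -/
lemma aux_skew_stable {m : Type*} [Fintype m] [DecidableEq m]
    (Ω : Matrix m m ℝ) (h : Ωᵀ = -Ω) :
    ∀ z ∈ spectrum ℂ (mapC Ω), z.re = 0 := by
  intro z hz
  set A := mapC Ω with hA
  have hAT : Aᵀ = -A := by
    rw [hA, mapC, ← Matrix.transpose_map, h]
    ext i j; simp [Matrix.map]
  have hAH : Aᴴ = -A := by
    rw [conjTranspose, ← hAT]
    ext i j
    simp [hA, mapC, Matrix.map]
  rw [spectrum.mem_iff, Matrix.isUnit_iff_isUnit_det, isUnit_iff_ne_zero, not_not] at hz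
  obtain ⟨v, hv0, hv⟩ := (Matrix.exists_mulVec_eq_zero_iff).mpr hz
  have heig : A *ᵥ v = z • v := by
    have : (algebraMap ℂ (Matrix m m ℂ) z - A) *ᵥ v = z • v - A *ᵥ v := by
      rw [Matrix.sub_mulVec]
      congr 1
      rw [Algebra.algebraMap_eq_smul_one, Matrix.smul_mulVec, Matrix.one_mulVec]
    rw [this, sub_eq_zero] at hv
    exact hv.symm
  set s : ℂ := star v ⬝ᵥ v with hs
  set c : ℂ := star v ⬝ᵥ (A *ᵥ v) with hc
  have star_dot : ∀ (u w : m → ℂ), star (star u ⬝ᵥ w) = star w ⬝ᵥ u := by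
    intro u w
    have := Matrix.star_dotProduct_star u (star w)
    rw [star_star] at this
    rw [this, star_star]
  have hss : star s = s := by rw [hs, star_dot]
  have hcs : c = z * s := by rw [hc, heig, dotProduct_smul, hs]; ring_nf
  have hstarc : star c = -c := by
    rw [hc, star_dot, Matrix.star_mulVec, hAH, Matrix.vecMul_neg, neg_dotProduct,
      Matrix.dotProduct_mulVec]
  have hsne : s ≠ 0 := by
    open scoped ComplexOrder in
    exact fun hs0 => hv0 (dotProduct_star_self_eq_zero.mp hs0)
  have : (star z + z) * s = 0 := by
    have : star c + c = 0 := by rw [hstarc]; ring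
    rw [hcs, star_mul', hss] at this
    linear_combination this
  have hz0 : star z + z = 0 := by
    rcases mul_eq_zero.mp this with h' | h'
    · exact h'
    · exact absurd h' hsne
  have h1 := congrArg Complex.re hz0
  simp [Complex.add_re, Complex.conj_re] at h1
  linarith

/-- If `B` is real symmetric, `Ω` is invertible real skew-symmetric, and `Ω·B` is
invertible and spectrally stable, then `det(Ω·B) > 0` and `det(B) > 0`. -/
theorem stmt_7 (n : ℕ) (hn : 0 < n)
    (B Ω : Matrix (Fin n ⊕ Fin n) (Fin n ⊕ Fin n) ℝ)
    (hB : B.IsSymm) (hΩskew : Ωᵀ = -Ω) (hΩinv : IsUnit Ω.det)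
    (hinv : IsUnit (Ω * B).det) (hstab : spectrallyStable (Ω * B)) :
    0 < (Ω * B).det ∧ 0 < B.det := by
  have hcard : Fintype.card (Fin n ⊕ Fin n) = n + n := by simp
  have heven : Even (Fintype.card (Fin n ⊕ Fin n)) := by rw [hcard]; exact ⟨n, rfl⟩
  have hpos : 0 < Fintype.card (Fin n ⊕ Fin n) := by omega
  have h1 : 0 < (Ω * B).det :=
    aux_det_pos _ heven hpos (isUnit_iff_ne_zero.mp hinv) hstab
  have hΩpos : 0 < Ω.det :=
    aux_det_pos _ heven hpos (isUnit_iff_ne_zero.mp hΩinv) (aux_skew_stable Ω hΩskew)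
  refine ⟨h1, ?_⟩
  have hmul : Ω.det * B.det > 0 := by rwa [← Matrix.det_mul]
  nlinarith
end
end

section
/- Let n be a positive integer, let B be a real symmetric 2n×2n matrix, and let W be a linear subspace of ℝ^{2n} such that J·W ⊆ W and B·W ⊆ W, and such that the restriction of B to W is injective (hence an isomorphism of W). If J·B is spectrally stable, then the Morse index of B restricted to W is even. -/
open Matrix

noncomputable section

/-- The Morse index of the symmetric matrix `B` restricted to a `B`-invariant subspace `W`:
the maximal dimension of a linear subspace `U ⊆ W` on which the quadratic form
`x ↦ xᵀ B x` is negative definite. -/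
def morseIndexOn {m : Type*} [Fintype m] [DecidableEq m]
    (B : Matrix m m ℝ) (W : Submodule ℝ (m → ℝ)) : ℕ :=
  sSup {k : ℕ | ∃ U : Submodule ℝ (m → ℝ), U ≤ W ∧ Module.finrank ℝ U = k ∧
    ∀ x ∈ U, x ≠ 0 → x ⬝ᵥ B.mulVec x < 0}

section Aux

open Polynomial

lemma prod_pos_iff_even_negcard {ι : Type*} [DecidableEq ι] (d : ι → ℝ) :
    ∀ s : Finset ι, (∀ i ∈ s, d i ≠ 0) →
      ((0 < ∏ i ∈ s, d i) ↔ Even ((s.filter (fun i => d i < 0)).card)) := by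
  intro s
  induction s using Finset.induction_on with
  | empty => simp
  | @insert a s ha ih =>
    intro h0
    have hda : d a ≠ 0 := h0 a (Finset.mem_insert_self a s)
    have hs0 : ∀ i ∈ s, d i ≠ 0 := fun i hi => h0 i (Finset.mem_insert_of_mem hi)
    have hps : (∏ i ∈ s, d i) ≠ 0 := Finset.prod_ne_zero_iff.mpr hs0
    rw [Finset.prod_insert ha, Finset.filter_insert]
    rcases lt_or_gt_of_ne hda with hneg | hpos
    · rw [if_pos hneg,
        Finset.card_insert_of_notMem (fun h => ha (Finset.mem_of_mem_filter a h)),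
        Nat.even_add_one, ← ih hs0]
      constructor
      · intro h hP
        nlinarith
      · intro h
        rcases lt_or_gt_of_ne hps with hP | hP
        · nlinarith
        · exact absurd hP h
    · rw [if_neg (by exact fun h => absurd hpos (not_lt.mpr h.le)), ← ih hs0]
      constructor
      · intro h
        nlinarith
      · intro h
        exact mul_pos hpos h

lemma charpoly_eval_eq {D : ℕ} (M : Matrix (Fin D) (Fin D) ℝ) (μ : ℝ) :
    M.charpoly.eval μ = (μ • (1 : Matrix (Fin D) (Fin D) ℝ) - M).det := by
  rw [Matrix.charpoly, eval_det, Matrix.matPolyEquiv_charmatrix]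
  congr 1
  simp [smul_eq_diagonal_mul]

lemma det_pos_of_no_real_eigenvector {D : ℕ} (M : Matrix (Fin D) (Fin D) ℝ)
    (h : ∀ (μ : ℝ) (v : Fin D → ℝ), v ≠ 0 → M *ᵥ v = μ • v → False) :
    0 < M.det ∧ Even D := by
  have hmonic := M.charpoly_monic
  have hdeg : M.charpoly.natDegree = D := by
    simpa using M.charpoly_natDegree_eq_dim
  have hroot : ∀ μ : ℝ, ¬ M.charpoly.IsRoot μ := by
    intro μ hμ
    have hdet : (μ • (1 : Matrix (Fin D) (Fin D) ℝ) - M).det = 0 := by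
      rw [← charpoly_eval_eq]; exact hμ
    obtain ⟨v, hv0, hv⟩ := (Matrix.exists_mulVec_eq_zero_iff).mpr hdet
    apply h μ v hv0
    rw [Matrix.sub_mulVec, Matrix.smul_mulVec, Matrix.one_mulVec, sub_eq_zero] at hv
    exact hv.symm
  rcases Nat.eq_zero_or_pos D with hD | hD
  · subst hD
    constructor
    · simp [Matrix.det_isEmpty]
    · exact Even.zero
  have hp0 : M.charpoly ≠ 0 := hmonic.ne_zero
  have hdegpos : 0 < M.charpoly.degree := by
    rw [Polynomial.degree_eq_natDegree hp0, hdeg]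
    exact_mod_cast hD
  have htop : Filter.Tendsto (fun x => M.charpoly.eval x) Filter.atTop Filter.atTop :=
    Polynomial.tendsto_atTop_of_leadingCoeff_nonneg _ hdegpos
      (by rw [hmonic.leadingCoeff]; norm_num)
  obtain ⟨b, hb1, hb0⟩ := ((htop.eventually (Filter.eventually_ge_atTop (1:ℝ))).and
      (Filter.eventually_ge_atTop (0:ℝ))).exists
  have hcont : Continuous fun x => M.charpoly.eval x := M.charpoly.continuous
  have hDeven : Even D := by
    by_contra hodd
    rw [Nat.not_even_iff_odd] at hodd
    set q := M.charpoly.comp (-X) with hq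
    have hqdeg : q.natDegree = D := by
      rw [hq, Polynomial.natDegree_comp]
      simp [hdeg]
    have hqlead : q.leadingCoeff = -1 := by
      rw [hq, Polynomial.leadingCoeff_comp (by simp)]
      simp [hmonic.leadingCoeff, hdeg, hodd.neg_one_pow]
    have hq0 : q ≠ 0 := fun hh => by simp [hh] at hqlead
    have hqdegpos : 0 < q.degree := by
      rw [Polynomial.degree_eq_natDegree hq0, hqdeg]; exact_mod_cast hD
    have hqbot : Filter.Tendsto (fun x => q.eval x) Filter.atTop Filter.atBot :=
      Polynomial.tendsto_atBot_of_leadingCoeff_nonpos _ hqdegpos (by rw [hqlead]; norm_num)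
    obtain ⟨c, hc1, hc0⟩ := ((hqbot.eventually (Filter.eventually_le_atBot (-1:ℝ))).and
        (Filter.eventually_ge_atTop (0:ℝ))).exists
    have hcq : M.charpoly.eval (-c) ≤ -1 := by
      have hqc : q.eval c = M.charpoly.eval (-c) := by
        rw [hq]; simp [Polynomial.eval_comp]
      linarith [hqc ▸ hc1]
    have hle : (-c : ℝ) ≤ b := by linarith
    have hmem : (0:ℝ) ∈ Set.Icc (M.charpoly.eval (-c)) (M.charpoly.eval b) :=
      ⟨by linarith, by linarith⟩
    obtain ⟨x, _, hx⟩ := intermediate_value_Icc hle (hcont.continuousOn) hmem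
    exact hroot x hx
  refine ⟨?_, hDeven⟩
  have h0 : 0 < M.charpoly.eval 0 := by
    rcases lt_trichotomy (M.charpoly.eval 0) 0 with hlt | heq | hgt
    · have hmem : (0:ℝ) ∈ Set.Icc (M.charpoly.eval 0) (M.charpoly.eval b) :=
        ⟨le_of_lt hlt, by linarith⟩
      obtain ⟨x, _, hx⟩ := intermediate_value_Icc hb0 (hcont.continuousOn) hmem
      exact absurd hx (hroot x)
    · exact absurd heq (hroot 0)
    · exact hgt
  rw [Matrix.det_eq_sign_charpoly_coeff, Polynomial.coeff_zero_eq_eval_zero]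
  simpa [Even.neg_one_pow (by simpa using hDeven)] using h0

lemma mem_spectrum_of_eigenvector {m : Type*} [Fintype m] [DecidableEq m]
    (M : Matrix m m ℂ) (μ : ℂ) (v : m → ℂ) (hv : v ≠ 0) (hMv : M *ᵥ v = μ • v) :
    μ ∈ spectrum ℂ M := by
  rw [spectrum.mem_iff]
  intro hunit
  have hdet : (algebraMap ℂ (Matrix m m ℂ) μ - M).det = 0 := by
    rw [Matrix.exists_mulVec_eq_zero_iff.symm]
    refine ⟨v, hv, ?_⟩
    rw [Algebra.algebraMap_eq_smul_one, Matrix.sub_mulVec, Matrix.smul_mulVec,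
      Matrix.one_mulVec, hMv, sub_self]
  have hud := (Matrix.isUnit_iff_isUnit_det _).mp hunit
  rw [hdet] at hud
  exact not_isUnit_zero hud

lemma Jmat_transpose (n : ℕ) : (Jmat n)ᵀ = -(Jmat n) := by
  simp only [Jmat, Matrix.fromBlocks_transpose, Matrix.transpose_zero, Matrix.transpose_one,
    Matrix.transpose_neg, Matrix.fromBlocks_neg, neg_neg, neg_zero]

lemma Jmat_mul_Jmat (n : ℕ) : Jmat n * Jmat n = -1 := by
  have : (-1 : Matrix (Fin n ⊕ Fin n) (Fin n ⊕ Fin n) ℝ) =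
      Matrix.fromBlocks (-1) 0 0 (-1) := by
    rw [← Matrix.fromBlocks_one, Matrix.fromBlocks_neg]
    simp
  rw [this]
  simp [Jmat, Matrix.fromBlocks_multiply]

end Aux

set_option maxHeartbeats 1000000 in
/-- Let `W` be a `J`-invariant and `B`-invariant subspace on which `B` is injective
(hence an isomorphism of `W`). If `J·B` is spectrally stable, then the Morse index of
`B` restricted to `W` is even. -/
theorem stmt_8 (n : ℕ) (hn : 0 < n)
    (B : Matrix (Fin n ⊕ Fin n) (Fin n ⊕ Fin n) ℝ) (hB : B.IsSymm)
    (W : Submodule ℝ ((Fin n ⊕ Fin n) → ℝ))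
    (hJW : W.map (Jmat n).mulVecLin ≤ W)
    (hBW : W.map B.mulVecLin ≤ W)
    (hBinj : ∀ x ∈ W, B.mulVec x = 0 → x = 0)
    (hstab : spectrallyStable (Jmat n * B)) :
    Even (morseIndexOn B W) := by
  classical
  have hJmem : ∀ x ∈ W, (Jmat n) *ᵥ x ∈ W := fun x hx => hJW ⟨x, hx, rfl⟩
  have hBmem : ∀ x ∈ W, B *ᵥ x ∈ W := fun x hx => hBW ⟨x, hx, rfl⟩
  have hCmem : ∀ x ∈ W, (Jmat n * B) *ᵥ x ∈ W := by
    intro x hx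
    rw [← Matrix.mulVec_mulVec]
    exact hJmem _ (hBmem _ hx)
  -- the symmetric bilinear form on W
  let Q : LinearMap.BilinForm ℝ ↥W := LinearMap.mk₂ ℝ
    (fun x y : W => (x : _ → ℝ) ⬝ᵥ B *ᵥ (y : _ → ℝ))
    (by intros; simp [add_dotProduct])
    (by intros; simp [smul_dotProduct])
    (by intros; simp [Matrix.mulVec_add, dotProduct_add])
    (by intros; simp [Matrix.mulVec_smul, dotProduct_smul])
  have hQapp : ∀ x y : W, Q x y = (x : _ → ℝ) ⬝ᵥ B *ᵥ (y : _ → ℝ) := fun x y => rfl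
  have hsymm_amb : ∀ x y : (Fin n ⊕ Fin n) → ℝ, x ⬝ᵥ B *ᵥ y = (B *ᵥ x) ⬝ᵥ y := by
    intro x y
    rw [Matrix.dotProduct_mulVec, ← Matrix.mulVec_transpose, hB.eq]
  have hQsymm : Q.IsSymm := by
    refine ⟨fun x y => ?_⟩
    rw [hQapp, hQapp, hsymm_amb, dotProduct_comm]
  obtain ⟨e, he⟩ := LinearMap.BilinForm.exists_orthogonal_basis (LinearMap.BilinForm.isSymm_iff.mp hQsymm)
  have horth : ∀ i j, i ≠ j → Q (e i) (e j) = 0 := LinearMap.isOrthoᵢ_def.mp he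
  set d : Fin (Module.finrank ℝ ↥W) → ℝ := fun i => Q (e i) (e i) with hd
  -- expansion of Q in coordinates
  have hQe : ∀ (i : Fin (Module.finrank ℝ ↥W)) (w : W), Q (e i) w = e.repr w i * d i := by
    intro i w
    conv_lhs => rw [← Module.Basis.sum_repr e w, map_sum]
    rw [Finset.sum_eq_single i]
    · rw [_root_.map_smul, smul_eq_mul]
    · intro j _ hj
      rw [_root_.map_smul, smul_eq_mul, horth i j (Ne.symm hj), mul_zero]
    · intro hni
      exact absurd (Finset.mem_univ i) hni
  have hexp : ∀ v w : W, Q v w = ∑ i, e.repr v i * (e.repr w i * d i) := by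
    intro v w
    have h1 : Q v w = ∑ i, e.repr v i * (Q (e i) w) := by
      conv_lhs => rw [← Module.Basis.sum_repr e v, map_sum, LinearMap.sum_apply]
      refine Finset.sum_congr rfl fun i _ => ?_
      rw [_root_.map_smul, LinearMap.smul_apply, smul_eq_mul]
    rw [h1]
    exact Finset.sum_congr rfl fun i _ => by rw [hQe]
  -- nondegeneracy: the diagonal entries are nonzero
  have hd0 : ∀ i, d i ≠ 0 := by
    intro i hdi
    have hz : B *ᵥ ((e i : W) : _ → ℝ) ∈ W := hBmem _ (e i).2
    have h1 := hQe i ⟨_, hz⟩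
    rw [hdi, mul_zero, hQapp] at h1
    have h2 : (B *ᵥ ((e i : W) : _ → ℝ)) ⬝ᵥ (B *ᵥ ((e i : W) : _ → ℝ)) = 0 := by
      rw [← hsymm_amb]; exact h1
    have h3 : B *ᵥ ((e i : W) : _ → ℝ) = 0 := dotProduct_self_eq_zero.mp h2
    have h4 : ((e i : W) : _ → ℝ) = 0 := hBinj _ (e i).2 h3
    exact e.ne_zero i (Subtype.ext h4)
  -- the operator J·B restricted to W
  let Aop : ↥W →ₗ[ℝ] ↥W := ((Jmat n * B).mulVecLin).restrict hCmem
  have hAop : ∀ x : W, (Aop x : _ → ℝ) = (Jmat n * B) *ᵥ (x : _ → ℝ) := fun x => rfl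
  set MA := LinearMap.toMatrix e e Aop with hMA
  -- MA has no real eigenvalue
  have hMAeig : ∀ (μ : ℝ) (v : Fin (Module.finrank ℝ ↥W) → ℝ), v ≠ 0 → MA *ᵥ v = μ • v → False := by
    intro μ v hv0 hMv
    set x : W := e.repr.symm (Finsupp.equivFunOnFinite.symm v) with hx
    have hrep : ⇑(e.repr x) = v := by
      rw [hx]
      simp only [LinearEquiv.apply_symm_apply]
      rfl
    have hxA : Aop x = μ • x := by
      apply e.repr.injective
      apply DFunLike.coe_injective
      show ⇑(e.repr (Aop x)) = ⇑(e.repr (μ • x))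
      rw [← LinearMap.toMatrix_mulVec_repr e e Aop x, hrep, hMv, _root_.map_smul]
      funext i
      simp [hrep]
    have hx0 : x ≠ 0 := by
      intro h
      apply hv0
      rw [← hrep, h]
      simp
    have hamb : (Jmat n * B) *ᵥ (x : _ → ℝ) = μ • (x : _ → ℝ) := by
      have := congrArg (Subtype.val) hxA
      simpa [hAop] using this
    set u : (Fin n ⊕ Fin n) → ℂ := fun i => ((x : _ → ℝ) i : ℂ) with hu
    have hu0 : u ≠ 0 := by
      intro h
      apply hx0
      apply Subtype.ext
      funext i
      have := congrFun h i
      simpa [hu] using this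
    have hCu : mapC (Jmat n * B) *ᵥ u = (μ : ℂ) • u := by
      funext i
      have hi := congrFun hamb i
      simp only [Matrix.mulVec, dotProduct, Pi.smul_apply, smul_eq_mul] at hi
      simp only [mapC, Matrix.mulVec, dotProduct, Matrix.map_apply, Pi.smul_apply,
        smul_eq_mul, hu, Complex.coe_algebraMap]
      push_cast
      exact_mod_cast congrArg (fun t : ℝ => (t : ℂ)) hi
    have hre := hstab _ (mem_spectrum_of_eigenvector _ _ _ hu0 hCu)
    have hμ0 : μ = 0 := by simpa using hre
    rw [hμ0, zero_smul] at hamb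
    have hJBx : (Jmat n) *ᵥ (B *ᵥ (x : _ → ℝ)) = 0 := by
      rw [Matrix.mulVec_mulVec]; exact hamb
    have hBx : B *ᵥ (x : _ → ℝ) = 0 := by
      have h2 := congrArg (fun z => (Jmat n) *ᵥ z) hJBx
      simp only [Matrix.mulVec_mulVec, Matrix.mulVec_zero] at h2
      rw [← Matrix.mul_assoc, Jmat_mul_Jmat, neg_one_mul, Matrix.neg_mulVec, neg_eq_zero] at h2
      exact h2
    exact hx0 (Subtype.ext (hBinj _ x.2 hBx))
  obtain ⟨hdetMA, -⟩ := det_pos_of_no_real_eigenvector MA hMAeig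
  -- the skew Gram matrix
  set P := Matrix.diagonal d with hP
  have hQcomm : ∀ a b : W, Q a b = Q b a := fun a b => by
    have := hQsymm.eq a b; simpa using this
  have hNP : ∀ i j, Q (Aop (e i)) (e j) = (MAᵀ * P) i j := by
    intro i j
    have hR : (MAᵀ * P) i j = MA j i * d j := by
      rw [Matrix.mul_apply, Finset.sum_eq_single j]
      · rw [Matrix.transpose_apply, hP, Matrix.diagonal_apply_eq]
      · intro k _ hk
        rw [hP, Matrix.diagonal_apply_ne _ hk, mul_zero]
      · intro h
        exact absurd (Finset.mem_univ j) h
    have hL : Q (Aop (e i)) (e j) = e.repr (Aop (e i)) j * d j := by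
      rw [hQcomm, hQe j (Aop (e i))]
    rw [hL, hR, hMA, LinearMap.toMatrix_apply]
  have hET : (B * (Jmat n * B))ᵀ = -(B * (Jmat n * B)) := by
    rw [Matrix.transpose_mul, Matrix.transpose_mul, hB.eq, Jmat_transpose]
    simp [Matrix.mul_neg, Matrix.neg_mul, Matrix.mul_assoc]
  have hskewQ : ∀ x y : W, Q (Aop x) y = - Q x (Aop y) := by
    intro x y
    rw [hQapp, hQapp, hAop, hAop, hsymm_amb, Matrix.mulVec_mulVec, Matrix.mulVec_mulVec]
    conv_rhs => rw [Matrix.dotProduct_mulVec, ← Matrix.mulVec_transpose, hET,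
      Matrix.neg_mulVec, neg_dotProduct]
    rw [neg_neg]
  have hNskew : (MAᵀ * P)ᵀ = -(MAᵀ * P) := by
    ext i j
    rw [Matrix.transpose_apply, ← hNP j i, Matrix.neg_apply, ← hNP i j, hskewQ,
      neg_inj]
    exact hQcomm _ _
  have hdetPne : P.det ≠ 0 := by
    rw [hP, Matrix.det_diagonal]
    exact Finset.prod_ne_zero_iff.mpr (fun i _ => hd0 i)
  have hdetNne : (MAᵀ * P).det ≠ 0 := by
    rw [Matrix.det_mul, Matrix.det_transpose]
    exact mul_ne_zero (ne_of_gt hdetMA) hdetPne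
  have hNeig : ∀ (μ : ℝ) (v : Fin (Module.finrank ℝ ↥W) → ℝ), v ≠ 0 →
      (MAᵀ * P) *ᵥ v = μ • v → False := by
    intro μ v hv0 hNv
    have h1 : v ⬝ᵥ ((MAᵀ * P) *ᵥ v) = μ * (v ⬝ᵥ v) := by
      rw [hNv, dotProduct_smul, smul_eq_mul]
    have h2 : v ⬝ᵥ ((MAᵀ * P) *ᵥ v) = -(v ⬝ᵥ ((MAᵀ * P) *ᵥ v)) := by
      conv_lhs => rw [Matrix.dotProduct_mulVec, ← Matrix.mulVec_transpose, hNskew,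
        Matrix.neg_mulVec, neg_dotProduct]
      rw [neg_inj, dotProduct_comm]
    have hvv : v ⬝ᵥ v ≠ 0 := fun h => hv0 (dotProduct_self_eq_zero.mp h)
    have hμ : μ = 0 := by
      have h3 : μ * (v ⬝ᵥ v) = 0 := by linarith
      exact (mul_eq_zero.mp h3).resolve_right hvv
    rw [hμ, zero_smul] at hNv
    exact hdetNne (Matrix.exists_mulVec_eq_zero_iff.mp ⟨v, hv0, hNv⟩)
  obtain ⟨hdetN, -⟩ := det_pos_of_no_real_eigenvector _ hNeig
  have hprodpos : 0 < ∏ i, d i := by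
    have hsplit : (MAᵀ * P).det = MA.det * ∏ i, d i := by
      rw [Matrix.det_mul, Matrix.det_transpose, hP, Matrix.det_diagonal]
    rw [hsplit] at hdetN
    rcases mul_pos_iff.mp hdetN with ⟨-, h⟩ | ⟨h, -⟩
    · exact h
    · exact absurd hdetMA (not_lt.mpr h.le)
  have hEvenCard : Even ((Finset.univ.filter (fun i => d i < 0)).card) :=
    (prod_pos_iff_even_negcard d Finset.univ (fun i _ => hd0 i)).mp hprodpos
  set S : Finset (Fin (Module.finrank ℝ ↥W)) := Finset.univ.filter (fun i => d i < 0) with hS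
  -- the candidate negative-definite subspace
  have hli : LinearIndependent ℝ
      (fun i : {i // i ∈ S} => ((e (i : Fin (Module.finrank ℝ ↥W)) : W) : (Fin n ⊕ Fin n) → ℝ)) := by
    have h1 : LinearIndependent ℝ (fun i => ((e i : W) : (Fin n ⊕ Fin n) → ℝ)) :=
      e.linearIndependent.map' W.subtype (Submodule.ker_subtype W)
    exact h1.comp _ Subtype.val_injective
  set U : Submodule ℝ ((Fin n ⊕ Fin n) → ℝ) :=
    Submodule.span ℝ (Set.range
      (fun i : {i // i ∈ S} => ((e (i : Fin (Module.finrank ℝ ↥W)) : W) : (Fin n ⊕ Fin n) → ℝ)))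
    with hU
  have hUW : U ≤ W := by
    rw [hU, Submodule.span_le]
    rintro _ ⟨i, rfl⟩
    exact (e (i : Fin (Module.finrank ℝ ↥W))).2
  have hUrank : Module.finrank ℝ U = S.card := by
    rw [hU, finrank_span_eq_card hli, Fintype.card_coe]
  have himg : (⇑e '' (↑S : Set (Fin (Module.finrank ℝ ↥W)))) =
      Set.range (fun i : {i // i ∈ S} => e (i : Fin (Module.finrank ℝ ↥W))) :=
    Set.image_eq_range _ _
  have hUmap : U = Submodule.map W.subtype
      (Submodule.span ℝ (Set.range
        (fun i : {i // i ∈ S} => e (i : Fin (Module.finrank ℝ ↥W))))) := by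
    rw [hU, Submodule.map_span, ← Set.range_comp]
    rfl
  have hUneg : ∀ x ∈ U, x ≠ 0 → x ⬝ᵥ B *ᵥ x < 0 := by
    intro x hxU hx0
    have hxW : x ∈ W := hUW hxU
    set y : W := ⟨x, hxW⟩ with hy
    have hy0 : y ≠ 0 := fun h => hx0 (congrArg Subtype.val h)
    have hymem : y ∈ Submodule.span ℝ (⇑e '' (↑S : Set (Fin (Module.finrank ℝ ↥W)))) := by
      rw [himg]
      rw [hUmap] at hxU
      obtain ⟨y', hy', hval⟩ := hxU
      have heq : y = y' := Subtype.ext hval.symm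
      rw [heq]
      exact hy'
    have hysupp : ↑(e.repr y).support ⊆ (↑S : Set (Fin (Module.finrank ℝ ↥W))) :=
      (Module.Basis.mem_span_image e).mp hymem
    have hxQ : x ⬝ᵥ B *ᵥ x = Q y y := (hQapp y y).symm
    rw [hxQ, hexp y y]
    have hrepr0 : (e.repr y) ≠ 0 := fun h => hy0 (by
      apply e.repr.injective
      simp [h])
    obtain ⟨i0, hi0⟩ := Finsupp.ne_iff.mp hrepr0
    have hi0S : i0 ∈ S := by
      have : i0 ∈ (e.repr y).support := Finsupp.mem_support_iff.mpr (by simpa using hi0)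
      exact hysupp this
    have hterm : ∀ i ∈ Finset.univ, e.repr y i * (e.repr y i * d i) ≤ 0 := by
      intro i _
      by_cases hci : e.repr y i = 0
      · rw [hci]; simp
      · have hiS : i ∈ S := hysupp (Finsupp.mem_support_iff.mpr hci)
        have hdi : d i < 0 := (Finset.mem_filter.mp hiS).2
        nlinarith [mul_self_pos.mpr hci]
    have hex : ∃ i ∈ Finset.univ, e.repr y i * (e.repr y i * d i) < 0 := by
      refine ⟨i0, Finset.mem_univ _, ?_⟩
      have hdi : d i0 < 0 := (Finset.mem_filter.mp hi0S).2
      have hci : e.repr y i0 ≠ 0 := by simpa using hi0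
      nlinarith [mul_self_pos.mpr hci]
    have := Finset.sum_lt_sum hterm hex
    simpa using this
  -- upper bound
  have hub : ∀ k ∈ {k : ℕ | ∃ U' : Submodule ℝ ((Fin n ⊕ Fin n) → ℝ), U' ≤ W ∧
      Module.finrank ℝ U' = k ∧ ∀ x ∈ U', x ≠ 0 → x ⬝ᵥ B.mulVec x < 0}, k ≤ S.card := by
    rintro k ⟨U', hU'W, hrk, hneg⟩
    let φ : ↥U' →ₗ[ℝ] ({i // i ∈ S} → ℝ) := LinearMap.pi
      (fun i => (Finsupp.lapply (i : Fin (Module.finrank ℝ ↥W))) ∘ₗ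
        (e.repr.toLinearMap) ∘ₗ (Submodule.inclusion hU'W))
    have hφ0 : ∀ x : ↥U', φ x = 0 → x = 0 := by
      intro x hx
      set y : W := Submodule.inclusion hU'W x with hyy
      have hyS : ∀ i (hi : i ∈ S), e.repr y i = 0 := by
        intro i hi
        have := congrFun hx ⟨i, hi⟩
        simpa [φ] using this
      have hycoe : (y : (Fin n ⊕ Fin n) → ℝ) = (x : (Fin n ⊕ Fin n) → ℝ) := rfl
      by_contra hx0
      have hxamb : (x : (Fin n ⊕ Fin n) → ℝ) ≠ 0 := fun h => hx0 (Subtype.ext h)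
      have hlt := hneg (x : (Fin n ⊕ Fin n) → ℝ) x.2 hxamb
      have hQy : Q y y = (x : (Fin n ⊕ Fin n) → ℝ) ⬝ᵥ B *ᵥ (x : (Fin n ⊕ Fin n) → ℝ) := by
        rw [hQapp, hycoe]
      have hge : 0 ≤ Q y y := by
        rw [hexp y y]
        refine Finset.sum_nonneg fun i _ => ?_
        by_cases hiS : i ∈ S
        · rw [hyS i hiS]; simp
        · have hdi : 0 < d i := by
            rcases lt_trichotomy (d i) 0 with hlt' | heq | hgt
            · exact absurd (Finset.mem_filter.mpr ⟨Finset.mem_univ i, hlt'⟩ : i ∈ S) hiS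
            · exact absurd heq (hd0 i)
            · exact hgt
          nlinarith [mul_self_nonneg (e.repr y i)]
      rw [hQy] at hge
      exact absurd hlt (not_lt.mpr hge)
    have hφ : Function.Injective φ := by
      rw [← LinearMap.ker_eq_bot, LinearMap.ker_eq_bot']
      intro x hx
      exact hφ0 x hx
    calc k = Module.finrank ℝ U' := hrk.symm
      _ ≤ Module.finrank ℝ ({i // i ∈ S} → ℝ) :=
          LinearMap.finrank_le_finrank_of_injective hφ
      _ = S.card := by rw [Module.finrank_pi]; exact Fintype.card_coe S
  have hmem : S.card ∈ {k : ℕ | ∃ U' : Submodule ℝ ((Fin n ⊕ Fin n) → ℝ), U' ≤ W ∧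
      Module.finrank ℝ U' = k ∧ ∀ x ∈ U', x ≠ 0 → x ⬝ᵥ B.mulVec x < 0} :=
    ⟨U, hUW, hUrank, hUneg⟩
  have hfin : morseIndexOn B W = S.card := by
    have hdef : morseIndexOn B W = sSup {k : ℕ | ∃ U' : Submodule ℝ ((Fin n ⊕ Fin n) → ℝ),
        U' ≤ W ∧ Module.finrank ℝ U' = k ∧ ∀ x ∈ U', x ≠ 0 → x ⬝ᵥ B.mulVec x < 0} := rfl
    rw [hdef]
    exact IsGreatest.csSup_eq ⟨hmem, hub⟩
  rw [hfin]
  exact hEvenCard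
end
end

section
/- Let n be a positive integer, let B be a real symmetric 2n×2n matrix, and let W be a linear subspace of ℝ^{2n} such that J·W ⊆ W and B·W ⊆ W, and such that the restriction of B to W is injective (hence an isomorphism of W). If the Morse index of B restricted to W is odd, then J·B is spectrally unstable, i.e., J·B has a complex eigenvalue with nonzero real part. -/
open Matrix

noncomputable section

/- ### Auxiliary lemmas -/

theorem aux_root (p : Polynomial ℝ) (hm : p.Monic) (h0 : p.eval 0 < 0) :
    ∃ l : ℝ, l ≠ 0 ∧ p.IsRoot l := by
  have hdeg : 0 < p.degree := by
    by_contra h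
    push_neg at h
    have hc : p = Polynomial.C (p.coeff 0) := Polynomial.eq_C_of_degree_le_zero h
    have h1 : p.leadingCoeff = 1 := hm.leadingCoeff
    rw [hc, Polynomial.leadingCoeff_C] at h1
    rw [← Polynomial.coeff_zero_eq_eval_zero, h1] at h0
    linarith
  have htop := p.tendsto_atTop_of_leadingCoeff_nonneg hdeg (by rw [hm.leadingCoeff]; norm_num)
  obtain ⟨c, hc⟩ := ((htop.eventually_gt_atTop 0).and (Filter.eventually_gt_atTop 0)).exists
  have hcont : ContinuousOn (fun x => p.eval x) (Set.Icc 0 c) := p.continuous_aeval.continuousOn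
  have h00 : (0:ℝ) ∈ Set.Icc (p.eval 0) (p.eval c) := ⟨le_of_lt h0, le_of_lt hc.1⟩
  obtain ⟨l, hl, hl0⟩ := intermediate_value_Icc (le_of_lt hc.2) hcont h00
  refine ⟨l, fun h => ?_, hl0⟩
  rw [h] at hl0
  simp only [Polynomial.IsRoot] at hl0
  exact absurd hl0 (ne_of_lt h0)

theorem aux_detpos {d : ℕ} (G : Matrix (Fin d) (Fin d) ℝ) (hG : G * G = -1) : 0 < G.det := by
  have hmul : ∀ t : ℝ, ((Real.cos t) • (1 : Matrix (Fin d) (Fin d) ℝ) + (Real.sin t) • G) *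
      ((Real.cos t) • (1 : Matrix (Fin d) (Fin d) ℝ) - (Real.sin t) • G) = 1 := by
    intro t
    have expand : ((Real.cos t) • (1 : Matrix (Fin d) (Fin d) ℝ) + (Real.sin t) • G) *
        ((Real.cos t) • (1 : Matrix (Fin d) (Fin d) ℝ) - (Real.sin t) • G) =
        (Real.cos t * Real.cos t + Real.sin t * Real.sin t) • (1 : Matrix (Fin d) (Fin d) ℝ)
          - (Real.sin t * Real.sin t) • (G * G + 1) := by
      simp only [mul_sub, add_mul, smul_mul_smul_comm, Matrix.one_mul, Matrix.mul_one]
      module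
    rw [expand, hG]
    have h1 : Real.cos t * Real.cos t + Real.sin t * Real.sin t = 1 := by
      have := Real.sin_sq_add_cos_sq t; nlinarith
    rw [h1, neg_add_cancel, smul_zero, sub_zero, one_smul]
  set F : ℝ → ℝ := fun t => ((Real.cos t) • (1 : Matrix (Fin d) (Fin d) ℝ) + (Real.sin t) • G).det with hF
  have hcont : Continuous F := by
    apply Continuous.matrix_det
    exact (Real.continuous_cos.smul continuous_const).add (Real.continuous_sin.smul continuous_const)
  have hne : ∀ t, F t ≠ 0 := by
    intro t h0
    have : F t * ((Real.cos t) • (1 : Matrix (Fin d) (Fin d) ℝ) - (Real.sin t) • G).det = 1 := by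
      rw [hF]; rw [← Matrix.det_mul, hmul t, Matrix.det_one]
    rw [h0, zero_mul] at this; exact absurd this (by norm_num)
  have h1 : F 0 = 1 := by simp [hF]
  have h2 : F (Real.pi / 2) = G.det := by simp [hF]
  by_contra h
  push_neg at h
  rcases lt_or_eq_of_le h with h | h
  · have hπ : (0:ℝ) ≤ Real.pi / 2 := by positivity
    have h00 : (0:ℝ) ∈ Set.Icc (F (Real.pi/2)) (F 0) := ⟨by rw [h2]; linarith, by rw [h1]; linarith⟩
    obtain ⟨t, _, ht0⟩ := intermediate_value_Icc' hπ hcont.continuousOn h00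
    exact hne t ht0
  · exact hne (Real.pi/2) (by rw [h2, ← h])

theorem aux_eigvec {d : ℕ} (M : Matrix (Fin d) (Fin d) ℝ) {l : ℝ}
    (hl : M.charpoly.IsRoot l) : ∃ w : Fin d → ℝ, w ≠ 0 ∧ M.mulVec w = l • w := by
  have heval : M.charpoly.eval l = (Matrix.scalar (Fin d) l - M).det := by
    rw [Matrix.charpoly, _root_.eval_det, matPolyEquiv_charmatrix]
    simp
  have hdet : (Matrix.scalar (Fin d) l - M).det = 0 := by rw [← heval]; exact hl
  obtain ⟨w, hw0, hw⟩ := (Matrix.exists_mulVec_eq_zero_iff).2 hdet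
  refine ⟨w, hw0, ?_⟩
  have h1 : (Matrix.scalar (Fin d) l).mulVec w - M.mulVec w = 0 := by
    rw [← Matrix.sub_mulVec]; exact hw
  have h2 : (Matrix.scalar (Fin d) l).mulVec w = l • w := by
    ext i; simp [Matrix.scalar, Matrix.mulVec_diagonal]
  rw [h2] at h1
  exact (sub_eq_zero.mp h1).symm

theorem aux_spec {m : Type*} [Fintype m] [DecidableEq m] (M : Matrix m m ℝ)
    (x : m → ℝ) (hx : x ≠ 0) {l : ℝ} (hMx : M.mulVec x = l • x) :
    (l : ℂ) ∈ spectrum ℂ (mapC M) := by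
  rw [spectrum.mem_iff]
  intro hunit
  set v : m → ℂ := fun i => (x i : ℂ) with hv
  have hv0 : v ≠ 0 := by
    intro h
    apply hx
    ext i
    have h1 : v i = 0 := by rw [h]; rfl
    have h2 : ((x i : ℂ)) = 0 := h1
    exact_mod_cast h2
  have hAv : (algebraMap ℂ (Matrix m m ℂ) l - mapC M).mulVec v = 0 := by
    rw [Matrix.sub_mulVec]
    have h1 : (algebraMap ℂ (Matrix m m ℂ) l).mulVec v = l • v := by
      ext i
      simp [Matrix.algebraMap_eq_diagonal, Matrix.mulVec_diagonal]
    have h2 : (mapC M).mulVec v = l • v := by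
      ext i
      have hrow : (∑ j, M i j * x j) = l * x i := by
        have := congrFun hMx i
        simpa [Matrix.mulVec, dotProduct] using this
      show ∑ j, (algebraMap ℝ ℂ) (M i j) * v j = l • v i
      calc ∑ j, (algebraMap ℝ ℂ) (M i j) * v j = ((∑ j, M i j * x j : ℝ) : ℂ) := by
            push_cast [hv]
            rfl
        _ = ((l * x i : ℝ) : ℂ) := by rw [hrow]
        _ = l • v i := by push_cast [hv]; simp [smul_eq_mul]
    rw [h1, h2, sub_self]
  have hdetu : IsUnit (algebraMap ℂ (Matrix m m ℂ) l - mapC M).det :=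
    (Matrix.isUnit_iff_isUnit_det _).mp hunit
  have hdet0 : (algebraMap ℂ (Matrix m m ℂ) l - mapC M).det = 0 :=
    (Matrix.exists_mulVec_eq_zero_iff).mp ⟨v, hv0, hAv⟩
  rw [hdet0] at hdetu
  simp at hdetu

section Spectral

variable {V : Type*} [NormedAddCommGroup V] [InnerProductSpace ℝ V] [FiniteDimensional ℝ V]

theorem aux_hreprT (T : V →ₗ[ℝ] V) (hT : T.IsSymmetric) (d : ℕ) (hd : Module.finrank ℝ V = d)
    (x : V) (i : Fin d) :
    (hT.eigenvectorBasis hd).repr (T x) i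
      = hT.eigenvalues hd i * (hT.eigenvectorBasis hd).repr x i := by
  set e := hT.eigenvectorBasis hd
  have key : T (e i) = hT.eigenvalues hd i • e i :=
    (hT.hasEigenvector_eigenvectorBasis hd i).apply_eq_smul
  rw [e.repr_apply_apply, e.repr_apply_apply, ← hT (e i) x, key, real_inner_smul_left]

theorem aux_Q (T : V →ₗ[ℝ] V) (hT : T.IsSymmetric) (d : ℕ) (hd : Module.finrank ℝ V = d)
    (x : V) :
    (inner ℝ x (T x) : ℝ) = ∑ i, hT.eigenvalues hd i * ((hT.eigenvectorBasis hd).repr x i)^2 := by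
  set e := hT.eigenvectorBasis hd
  rw [← e.repr.inner_map_map x (T x), PiLp.inner_apply]
  apply Finset.sum_congr rfl
  intro i _
  rw [aux_hreprT T hT d hd]
  simp [RCLike.inner_apply]
  ring

theorem aux_upper (T : V →ₗ[ℝ] V) (hT : T.IsSymmetric) (d : ℕ) (hd : Module.finrank ℝ V = d)
    (U : Submodule ℝ V) (hU : ∀ x ∈ U, x ≠ 0 → (inner ℝ x (T x) : ℝ) < 0) :
    Module.finrank ℝ U ≤ (Finset.univ.filter (fun i => hT.eigenvalues hd i < 0)).card := by
  classical
  set μ := hT.eigenvalues hd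
  set e := hT.eigenvectorBasis hd
  set S := Finset.univ.filter (fun i => μ i < 0) with hS
  set L : U →ₗ[ℝ] ({i // i ∈ S} → ℝ) :=
    (LinearMap.funLeft ℝ ℝ (fun i : {i // i ∈ S} => (i : Fin d))).comp
      (((WithLp.linearEquiv 2 ℝ (Fin d → ℝ)).toLinearMap.comp (e.repr.toLinearEquiv.toLinearMap : V →ₗ[ℝ] (EuclideanSpace ℝ (Fin d)))).comp U.subtype)
      with hL
  have hinj : Function.Injective L := by
    rw [← LinearMap.ker_eq_bot]
    rw [Submodule.eq_bot_iff]
    intro u hu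
    have hrepr0 : ∀ i ∈ S, e.repr (u : V) i = 0 := by
      intro i hi
      have := congrFun (LinearMap.mem_ker.mp hu) ⟨i, hi⟩
      exact this
    by_contra h0
    have hu0 : (u : V) ≠ 0 := fun h => h0 (Submodule.coe_eq_zero.mp h)
    have hlt := hU u u.2 hu0
    rw [aux_Q T hT d hd] at hlt
    have hge : (0:ℝ) ≤ ∑ i, μ i * (e.repr (u:V) i)^2 := by
      apply Finset.sum_nonneg
      intro i _
      by_cases hi : i ∈ S
      · rw [hrepr0 i hi]; simp
      · have h1 : ¬ μ i < 0 := by simpa [hS] using hi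
        have := le_of_not_gt h1
        positivity
    linarith
  calc Module.finrank ℝ U ≤ Module.finrank ℝ ({i // i ∈ S} → ℝ) :=
        LinearMap.finrank_le_finrank_of_injective hinj
    _ = S.card := by rw [Module.finrank_fintype_fun_eq_card]; exact Fintype.card_coe S

theorem aux_lower (T : V →ₗ[ℝ] V) (hT : T.IsSymmetric) (d : ℕ) (hd : Module.finrank ℝ V = d) :
    ∃ U : Submodule ℝ V,
      Module.finrank ℝ U = (Finset.univ.filter (fun i => hT.eigenvalues hd i < 0)).card ∧
      ∀ x ∈ U, x ≠ 0 → (inner ℝ x (T x) : ℝ) < 0 := by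
  classical
  set μ := hT.eigenvalues hd
  set e := hT.eigenvectorBasis hd
  set S := Finset.univ.filter (fun i => μ i < 0) with hS
  set v : {i // i ∈ S} → V := fun i => e i.1 with hv
  have hvon : Orthonormal ℝ v := e.orthonormal.comp _ Subtype.val_injective
  refine ⟨Submodule.span ℝ (Set.range v), ?_, ?_⟩
  · rw [finrank_span_eq_card hvon.linearIndependent]
    exact Fintype.card_coe S
  · have hrepr0 : ∀ i, i ∉ S → ∀ x ∈ Submodule.span ℝ (Set.range v), e.repr x i = 0 := by
      intro i hi x hx
      induction hx using Submodule.span_induction with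
      | mem y hy =>
          obtain ⟨j, rfl⟩ := hy
          rw [hv]
          rw [e.repr_self]
          have hne : ¬ ((j : Fin d) = i) := by
            intro h; exact hi (h ▸ j.2)
          rw [EuclideanSpace.single_apply, if_neg (fun h => hne h.symm)]
      | zero => simp
      | add y z _ _ h1 h2 => rw [map_add]; simp [h1, h2]
      | smul c y _ h1 => rw [_root_.map_smul]; simp [h1]
    intro x hx hx0
    have hrepr0' : ∀ i, i ∉ S → e.repr x i = 0 := fun i hi => hrepr0 i hi x hx
    rw [aux_Q T hT d hd]
    have hterm : ∀ i ∈ Finset.univ, μ i * (e.repr x i)^2 ≤ 0 := by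
      intro i _
      by_cases hi : i ∈ S
      · have : μ i < 0 := by simpa [hS] using hi
        nlinarith [sq_nonneg (e.repr x i)]
      · rw [hrepr0' i hi]; simp
    have hex : ∃ i ∈ Finset.univ, μ i * (e.repr x i)^2 < 0 := by
      have hne : e.repr x ≠ 0 := by
        intro h
        apply hx0
        apply e.repr.injective
        rw [h, map_zero]
      obtain ⟨i, hi⟩ : ∃ i, e.repr x i ≠ 0 := by
        by_contra hc
        push_neg at hc
        exact hne (by ext i; simp [hc])
      have hi' : e.repr x i ≠ 0 := by simpa using hi
      have hiS : i ∈ S := by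
        by_contra h
        exact hi' (hrepr0' i h)
      have hμi : μ i < 0 := by simpa [hS] using hiS
      refine ⟨i, Finset.mem_univ i, ?_⟩
      have h2 : (0:ℝ) < (e.repr x i)^2 := by positivity
      nlinarith
    calc ∑ i, μ i * (e.repr x i)^2 < ∑ _i : Fin d, (0:ℝ) := by
          apply Finset.sum_lt_sum hterm
          obtain ⟨i, hi, hlt⟩ := hex
          exact ⟨i, hi, hlt⟩
      _ = 0 := by simp

end Spectral

set_option maxHeartbeats 1000000 in
/-- Let `W` be a `J`-invariant and `B`-invariant subspace on which `B` is injective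
(hence an isomorphism of `W`). If the Morse index of `B` restricted to `W` is odd,
then `J·B` is spectrally unstable: it has a complex eigenvalue with nonzero real part. -/
theorem stmt_9 (n : ℕ) (hn : 0 < n)
    (B : Matrix (Fin n ⊕ Fin n) (Fin n ⊕ Fin n) ℝ) (hB : B.IsSymm)
    (W : Submodule ℝ ((Fin n ⊕ Fin n) → ℝ))
    (hJW : W.map (Jmat n).mulVecLin ≤ W)
    (hBW : W.map B.mulVecLin ≤ W)
    (hBinj : ∀ x ∈ W, B.mulVec x = 0 → x = 0)
    (hodd : Odd (morseIndexOn B W)) :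
    ∃ z ∈ spectrum ℂ (mapC (Jmat n * B)), z.re ≠ 0 := by
  classical
  -- view W inside Euclidean space
  set W' : Submodule ℝ (EuclideanSpace ℝ (Fin n ⊕ Fin n)) := W.comap (WithLp.linearEquiv 2 ℝ ((Fin n ⊕ Fin n) → ℝ)).toLinearMap with hW'
  have hBW' : ∀ x ∈ W', Matrix.toEuclideanLin B x ∈ W' := fun x hx => hBW ⟨_, hx, rfl⟩
  have hJW' : ∀ x ∈ W', Matrix.toEuclideanLin (Jmat n) x ∈ W' := fun x hx => hJW ⟨_, hx, rfl⟩
  have hJBW' : ∀ x ∈ W', Matrix.toEuclideanLin (Jmat n * B) x ∈ W' := by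
    intro x hx
    show (Jmat n * B).mulVec (WithLp.ofLp x) ∈ W
    rw [← Matrix.mulVec_mulVec]
    exact hJW' _ (hBW' x hx)
  set T : W' →ₗ[ℝ] W' := (Matrix.toEuclideanLin B).restrict hBW' with hTdef
  set g : W' →ₗ[ℝ] W' := (Matrix.toEuclideanLin (Jmat n)).restrict hJW' with hgdef
  set f : W' →ₗ[ℝ] W' := (Matrix.toEuclideanLin (Jmat n * B)).restrict hJBW' with hfdef
  have hcoe0 : ∀ x : W', (x : (Fin n ⊕ Fin n) → ℝ) = 0 → x = 0 := by
    intro x h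
    apply Subtype.ext
    simpa using h
  have hTapp : ∀ x : W', (T x : (Fin n ⊕ Fin n) → ℝ) = B.mulVec (x : (Fin n ⊕ Fin n) → ℝ) := fun _ => rfl
  have hgapp : ∀ x : W', (g x : (Fin n ⊕ Fin n) → ℝ) = (Jmat n).mulVec (x : (Fin n ⊕ Fin n) → ℝ) := fun _ => rfl
  have hfapp : ∀ x : W', (f x : (Fin n ⊕ Fin n) → ℝ) = (Jmat n * B).mulVec (x : (Fin n ⊕ Fin n) → ℝ) := fun _ => rfl
  have hinner : ∀ x y : W', (inner ℝ x y : ℝ) = (x : (Fin n ⊕ Fin n) → ℝ) ⬝ᵥ (y : (Fin n ⊕ Fin n) → ℝ) := by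
    intro x y
    rw [Submodule.coe_inner, EuclideanSpace.inner_eq_star_dotProduct]
    simp [dotProduct, mul_comm]
  have hTsymm : T.IsSymmetric := by
    intro x y
    rw [hinner, hinner, hTapp, hTapp]
    rw [Matrix.dotProduct_mulVec, ← Matrix.mulVec_transpose, hB.eq]
  set d : ℕ := Module.finrank ℝ W' with hddef
  have hd : Module.finrank ℝ W' = d := rfl
  set e := hTsymm.eigenvectorBasis hd with hedef
  set μ := hTsymm.eigenvalues hd with hμdef
  set S := Finset.univ.filter (fun i => μ i < 0) with hSdef
  -- eigenvalues are nonzero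
  have hμne : ∀ i, μ i ≠ 0 := by
    intro i h0
    have key : T (e i) = μ i • e i :=
      (hTsymm.hasEigenvector_eigenvectorBasis hd i).apply_eq_smul
    rw [h0, zero_smul] at key
    have : B.mulVec ((e i : W') : (Fin n ⊕ Fin n) → ℝ) = 0 := by
      rw [← hTapp, key]; rfl
    have hz : ((e i : W') : (Fin n ⊕ Fin n) → ℝ) = 0 := hBinj _ (e i).2 this
    have : (e i : W') = 0 := hcoe0 _ hz
    exact (hTsymm.hasEigenvector_eigenvectorBasis hd i).2 this
  -- Morse index equals the number of negative eigenvalues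
  have hmorse : morseIndexOn B W = S.card := by
    have hQcoe : ∀ x : W', (inner ℝ x (T x) : ℝ) = (x : (Fin n ⊕ Fin n) → ℝ) ⬝ᵥ B.mulVec (x : (Fin n ⊕ Fin n) → ℝ) := by
      intro x
      rw [hinner, hTapp]
    -- membership
    obtain ⟨U₀, hU₀rank, hU₀neg⟩ := aux_lower T hTsymm d hd
    have hmem : S.card ∈ {k : ℕ | ∃ U : Submodule ℝ ((Fin n ⊕ Fin n) → ℝ), U ≤ W ∧ Module.finrank ℝ U = k ∧
        ∀ x ∈ U, x ≠ 0 → x ⬝ᵥ B.mulVec x < 0} := by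
      refine ⟨U₀.map ((WithLp.linearEquiv 2 ℝ ((Fin n ⊕ Fin n) → ℝ)).toLinearMap ∘ₗ W'.subtype), by rintro _ ⟨y, _, rfl⟩; exact y.2, ?_, ?_⟩
      · exact (LinearEquiv.finrank_eq (Submodule.equivMapOfInjective _ (by intro a c h; exact Subtype.ext ((WithLp.linearEquiv 2 ℝ ((Fin n ⊕ Fin n) → ℝ)).injective h)) U₀)).symm.trans hU₀rank
      · rintro x ⟨y, hy, rfl⟩ hxne
        have hyne : y ≠ 0 := fun h => hxne (by rw [h, map_zero])
        have := hU₀neg y hy hyne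
        rw [hQcoe] at this
        exact this
    have hub : ∀ k ∈ {k : ℕ | ∃ U : Submodule ℝ ((Fin n ⊕ Fin n) → ℝ), U ≤ W ∧ Module.finrank ℝ U = k ∧
        ∀ x ∈ U, x ≠ 0 → x ⬝ᵥ B.mulVec x < 0}, k ≤ S.card := by
      rintro k ⟨U, hUW, hUrank, hUneg⟩
      have hle : U.map (WithLp.linearEquiv 2 ℝ ((Fin n ⊕ Fin n) → ℝ)).symm.toLinearMap ≤ W' := by
        rintro _ ⟨y, hy, rfl⟩
        exact hUW hy
      have := aux_upper T hTsymm d hd ((U.map (WithLp.linearEquiv 2 ℝ ((Fin n ⊕ Fin n) → ℝ)).symm.toLinearMap).comap W'.subtype) ?_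
      · rw [← hUrank]
        refine le_trans (le_of_eq ?_) this
        rw [LinearEquiv.finrank_eq (Submodule.comapSubtypeEquivOfLe hle)]
        exact LinearEquiv.finrank_eq (Submodule.equivMapOfInjective _ (WithLp.linearEquiv 2 ℝ ((Fin n ⊕ Fin n) → ℝ)).symm.injective U)
      · intro x hx hx0
        rw [hQcoe]
        obtain ⟨y, hy, hyx⟩ := hx
        have hxy : (x : (Fin n ⊕ Fin n) → ℝ) = y := (congrArg WithLp.ofLp hyx).symm
        rw [hxy]
        apply hUneg _ hy
        intro h
        exact hx0 (hcoe0 x (hxy.trans h))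
    rw [morseIndexOn]
    exact le_antisymm (csSup_le ⟨S.card, hmem⟩ hub) (le_csSup ⟨S.card, hub⟩ hmem)
  rw [hmorse] at hodd
  -- determinant of T restricted: product of eigenvalues, negative
  set b := e.toBasis with hbdef
  set MB := LinearMap.toMatrix b b T with hMBdef
  have hMB : MB = Matrix.diagonal μ := by
    ext i j
    rw [hMBdef, LinearMap.toMatrix_apply', hbdef]
    rw [e.coe_toBasis_repr_apply]
    have hbj : e.toBasis j = e j := congrFun e.coe_toBasis j
    rw [hbj, aux_hreprT T hTsymm d hd, e.repr_self]
    by_cases h : i = j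
    · subst h
      rw [Matrix.diagonal_apply_eq, EuclideanSpace.single_apply, if_pos rfl, mul_one]
    · rw [Matrix.diagonal_apply_ne _ h]
      rw [EuclideanSpace.single_apply, if_neg h]
      ring
  have hdetMB : MB.det < 0 := by
    rw [hMB, Matrix.det_diagonal]
    rw [← Finset.prod_filter_mul_prod_filter_not Finset.univ (fun i => μ i < 0)]
    have h1 : ∏ i ∈ S, μ i < 0 := by
      have heq : ∏ i ∈ S, μ i = (-1:ℝ)^S.card * ∏ i ∈ S, (-(μ i)) := by
        have hterm : ∀ i ∈ S, μ i = (-1:ℝ) * (-(μ i)) := fun i _ => by ring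
        rw [Finset.prod_congr rfl hterm, Finset.prod_mul_distrib, Finset.prod_const]
      rw [heq, hodd.neg_one_pow]
      have hpos : 0 < ∏ i ∈ S, (-(μ i)) := by
        apply Finset.prod_pos
        intro i hi
        have : μ i < 0 := by simpa [hSdef] using hi
        linarith
      nlinarith
    have h2 : 0 < ∏ i ∈ Finset.univ.filter (fun i => ¬ μ i < 0), μ i := by
      apply Finset.prod_pos
      intro i hi
      have hni : ¬ μ i < 0 := by simpa using (Finset.mem_filter.mp hi).2
      exact lt_of_le_of_ne (le_of_not_gt hni) (Ne.symm (hμne i))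
    exact mul_neg_of_neg_of_pos h1 h2
  -- J restricted squares to -1
  set MJ := LinearMap.toMatrix b b g with hMJdef
  have hgg : g ∘ₗ g = -LinearMap.id := by
    apply LinearMap.ext
    intro x
    apply Subtype.ext
    apply WithLp.ofLp_injective 2
    show (g (g x) : (Fin n ⊕ Fin n) → ℝ) = -(x : (Fin n ⊕ Fin n) → ℝ)
    rw [hgapp, hgapp, Matrix.mulVec_mulVec]
    have hJJ : Jmat n * Jmat n = -1 := by
      rw [Jmat, Matrix.fromBlocks_multiply]
      ext (i|i) (j|j) <;>
        simp [Matrix.fromBlocks, Matrix.one_apply, Matrix.neg_apply]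
    rw [hJJ, Matrix.neg_mulVec, Matrix.one_mulVec]
  have hMJMJ : MJ * MJ = -1 := by
    rw [hMJdef, ← LinearMap.toMatrix_comp b b b, hgg]
    have hneg : LinearMap.toMatrix b b (-(LinearMap.id : W' →ₗ[ℝ] W')) = -1 := by
      ext i j
      rw [LinearMap.toMatrix_apply']
      simp [Matrix.one_apply, Finsupp.single_apply, Matrix.neg_apply, eq_comm]
    rw [hneg]
  have hdetMJ : 0 < MJ.det := aux_detpos MJ hMJMJ
  -- f = g ∘ T
  have hfgT : f = g ∘ₗ T := by
    apply LinearMap.ext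
    intro x
    apply Subtype.ext
    apply WithLp.ofLp_injective 2
    show (f x : (Fin n ⊕ Fin n) → ℝ) = (g (T x) : (Fin n ⊕ Fin n) → ℝ)
    rw [hfapp, hgapp, hTapp, Matrix.mulVec_mulVec]
  set Mf := LinearMap.toMatrix b b f with hMfdef
  have hMf : Mf = MJ * MB := by
    rw [hMfdef, hfgT, LinearMap.toMatrix_comp b b b, hMJdef, hMBdef]
  have hdetMf : Mf.det < 0 := by
    rw [hMf, Matrix.det_mul]
    exact mul_neg_of_pos_of_neg hdetMJ hdetMB
  -- the dimension is even: (-1)^d = 1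
  have hsign : ((-1 : ℝ))^d = 1 := by
    have h1 : (MJ.det)^2 = ((-1:ℝ))^d := by
      rw [sq, ← Matrix.det_mul, hMJMJ]
      rw [show (-1 : Matrix (Fin d) (Fin d) ℝ) = -(1 : Matrix (Fin d) (Fin d) ℝ) from rfl]
      rw [Matrix.det_neg]
      simp
    rcases Nat.even_or_odd d with hev | hod
    · exact hev.neg_one_pow
    · exfalso
      rw [hod.neg_one_pow] at h1
      nlinarith
  -- charpoly of Mf at 0 is negative
  have heval0 : Mf.charpoly.eval 0 < 0 := by
    have := Matrix.det_eq_sign_charpoly_coeff Mf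
    rw [Fintype.card_fin] at this
    rw [← Polynomial.coeff_zero_eq_eval_zero]
    have h2 : Mf.charpoly.coeff 0 = ((-1:ℝ))^d * Mf.det := by
      rw [this, ← mul_assoc, ← pow_add]
      have : ((-1:ℝ))^(d+d) = 1 := by
        rw [pow_add, hsign]; norm_num
      rw [this, one_mul]
    rw [h2, hsign, one_mul]
    exact hdetMf
  -- a nonzero real root of the charpoly
  obtain ⟨l, hl0, hlroot⟩ := aux_root Mf.charpoly (Matrix.charpoly_monic Mf) heval0
  -- eigenvector for Mf
  obtain ⟨w, hw0, hw⟩ := aux_eigvec Mf hlroot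
  -- transfer to an eigenvector of J*B in W
  set x : W' := b.equivFun.symm w with hxdef
  have hbx : ⇑(b.repr x) = w := by
    funext i
    rw [← Module.Basis.equivFun_apply, hxdef, LinearEquiv.apply_symm_apply]
  have hfx : f x = l • x := by
    apply b.repr.injective
    apply DFunLike.coe_injective
    show ⇑(b.repr (f x)) = ⇑(b.repr (l • x))
    have h1 := LinearMap.toMatrix_mulVec_repr b b f x
    rw [hbx] at h1
    rw [← h1, ← hMfdef, hw]
    funext i
    rw [_root_.map_smul]
    simp [hbx]
  have hxne : x ≠ 0 := by
    intro h
    apply hw0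
    rw [hxdef] at h
    have := congrArg b.equivFun h
    rw [LinearEquiv.apply_symm_apply, map_zero] at this
    exact this
  have hxcne : ((x : W') : (Fin n ⊕ Fin n) → ℝ) ≠ 0 := fun h => hxne (hcoe0 x h)
  have hJBx : (Jmat n * B).mulVec ((x : W') : (Fin n ⊕ Fin n) → ℝ) = l • ((x : W') : (Fin n ⊕ Fin n) → ℝ) := by
    rw [← hfapp, hfx]; rfl
  refine ⟨(l : ℂ), aux_spec (Jmat n * B) _ hxcne hJBx, ?_⟩
  simpa using hl0
end
end

section
/- Every invertible real skew-symmetric 2n×2n matrix Ω can be written as Ω = Q·J·Qᵀ for some invertible real 2n×2n matrix Q. -/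
open Matrix

noncomputable section

open Module Submodule
open LinearMap (BilinForm)

/-- Abstract symplectic-basis property. -/
def isSympBasis {V : Type} [AddCommGroup V] [Module ℝ V] {ι : Type}
    (B : BilinForm ℝ V) (c : Basis (ι ⊕ ι) ℝ V) : Prop :=
  (∀ a b, B (c (Sum.inl a)) (c (Sum.inl b)) = 0) ∧
  (∀ a b, B (c (Sum.inr a)) (c (Sum.inr b)) = 0) ∧
  (∀ a, B (c (Sum.inr a)) (c (Sum.inl a)) = 1) ∧
  (∀ a b, a ≠ b → B (c (Sum.inr a)) (c (Sum.inl b)) = 0)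

theorem symp_aux (k : ℕ) : ∀ (V : Type) [AddCommGroup V] [Module ℝ V] [FiniteDimensional ℝ V],
    Module.finrank ℝ V ≤ k → ∀ B : BilinForm ℝ V, B.IsAlt → B.Nondegenerate →
    ∃ (ι : Type) (_ : Fintype ι) (c : Basis (ι ⊕ ι) ℝ V), isSympBasis B c := by
  induction k with
  | zero =>
    intro V _ _ _ hrk B _ _
    have : Module.finrank ℝ V = 0 := Nat.le_zero.mp hrk
    have : Subsingleton V := Module.finrank_zero_iff.mp this
    refine ⟨Empty, inferInstance, Basis.empty V, ?_⟩
    exact ⟨fun a => a.elim, fun a => a.elim, fun a => a.elim, fun a => a.elim⟩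
  | succ k ih =>
    intro V _ _ _ hrk B hAlt hNondeg
    by_cases h0 : Module.finrank ℝ V = 0
    · have : Subsingleton V := Module.finrank_zero_iff.mp h0
      refine ⟨Empty, inferInstance, Basis.empty V, ?_⟩
      exact ⟨fun a => a.elim, fun a => a.elim, fun a => a.elim, fun a => a.elim⟩
    · have hRefl : B.IsRefl := hAlt.isRefl
      -- pick x ≠ 0 and y with B x y = 1
      have : Nontrivial V := Module.nontrivial_of_finrank_pos (Nat.pos_of_ne_zero h0)
      obtain ⟨x, hx⟩ := exists_ne (0 : V)
      have hxy' : ¬ ∀ z, B x z = 0 := fun h => hx (hNondeg.1 x h)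
      push_neg at hxy'
      obtain ⟨y', hy'⟩ := hxy'
      set y : V := (B x y')⁻¹ • y' with hy_def
      have hxy : B x y = 1 := by
        rw [hy_def, LinearMap.map_smul, smul_eq_mul]
        exact inv_mul_cancel₀ hy'
      have hyx : B y x = -1 := by
        have h := LinearMap.IsAlt.neg hAlt x y
        rw [hxy] at h
        linarith [h]
      -- the plane W
      set v : (Unit ⊕ Unit) → V := Sum.elim (fun _ => y) (fun _ => x) with hv_def
      have hxne : x ≠ 0 := hx
      have hli2 : LinearIndependent ℝ ![y, x] := by
        rw [linearIndependent_fin2]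
        refine ⟨by simpa using hxne, fun a ha => ?_⟩
        simp only [Matrix.cons_val_zero, Matrix.cons_val_one, Matrix.head_cons] at ha
        have h1 : B x y = 0 := by rw [← ha, LinearMap.map_smul, hAlt x, smul_zero]
        rw [hxy] at h1
        exact one_ne_zero h1
      have hli : LinearIndependent ℝ v := by
        have hg : v = ![y, x] ∘ (Sum.elim (fun _ : Unit => (0 : Fin 2)) (fun _ : Unit => 1)) := by
          funext z; cases z <;> rfl
        rw [hg]
        apply hli2.comp
        rintro (a | a) (b | b) h <;> simp_all
      set W : Submodule ℝ V := Submodule.span ℝ (Set.range v) with hW_def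
      have hxW : x ∈ W := Submodule.subset_span ⟨Sum.inr (), rfl⟩
      have hyW : y ∈ W := Submodule.subset_span ⟨Sum.inl (), rfl⟩
      have hrange : Set.range v = {y, x} := by
        ext z
        constructor
        · rintro ⟨(a | a), rfl⟩ <;> simp [hv_def]
        · rintro (rfl | rfl)
          exacts [⟨Sum.inl (), rfl⟩, ⟨Sum.inr (), rfl⟩]
      have hmemW : ∀ z ∈ W, ∃ a b : ℝ, a • y + b • x = z := by
        intro z hz
        rw [hW_def, hrange] at hz
        exact Submodule.mem_span_pair.mp hz
      -- restriction to W is nondegenerate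
      have hWnd : (B.restrict W).Nondegenerate := by
        refine (LinearMap.IsRefl.nondegenerate_iff_separatingLeft (B := B.restrict W) (fun a b h => hRefl _ _ h)).mpr ?_
        intro m hm
        obtain ⟨a, b, hab⟩ := hmemW m.1 m.2
        have h1 : B m.1 x = -a := by
          rw [← hab]
          simp [hyx, hAlt x]
        have h2 : B m.1 y = b := by
          rw [← hab]
          simp [hxy, hAlt y]
        have e1 := hm ⟨x, hxW⟩
        have e2 := hm ⟨y, hyW⟩
        simp only [LinearMap.BilinForm.restrict_apply, LinearMap.domRestrict_apply] at e1 e2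
        rw [h1] at e1
        rw [h2] at e2
        have ha : a = 0 := by linarith [e1]
        have hb : b = 0 := e2 ▸ rfl
        ext
        rw [← hab, ha, hb]
        simp
      have hcompl : IsCompl W (B.orthogonal W) :=
        LinearMap.BilinForm.isCompl_orthogonal_of_restrict_nondegenerate hRefl hWnd
      set U : Submodule ℝ V := B.orthogonal W with hU_def
      -- restriction to U is nondegenerate and alternating
      have hUU : B.orthogonal U = W :=
        LinearMap.BilinForm.orthogonal_orthogonal hNondeg hRefl W
      have hUnd : (B.restrict U).Nondegenerate := by
        apply B.nondegenerate_restrict_of_disjoint_orthogonal hRefl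
        rw [hUU]
        exact hcompl.disjoint.symm
      have hUalt : (B.restrict U).IsAlt := fun z => hAlt z.1
      -- dimension count
      have hWrk : finrank ℝ W = 2 := by
        rw [hW_def, finrank_span_eq_card hli]
        simp
      have hUrk : finrank ℝ U ≤ k := by
        rw [hU_def, LinearMap.BilinForm.finrank_orthogonal hNondeg W, hWrk]
        omega
      obtain ⟨ι, hι, c, hc1, hc2, hc3, hc4⟩ := ih U hUrk (B.restrict U) hUalt hUnd
      -- basis of W
      let bW : Basis (Unit ⊕ Unit) ℝ W := Basis.span hli
      have hbWl : (bW (Sum.inl ()) : V) = y := congrArg Subtype.val (Module.Basis.span_apply hli (Sum.inl ()))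
      have hbWr : (bW (Sum.inr ()) : V) = x := congrArg Subtype.val (Module.Basis.span_apply hli (Sum.inr ()))
      -- assemble
      let e : (W × U) ≃ₗ[ℝ] V := Submodule.prodEquivOfIsCompl W U hcompl
      let d : Basis ((Unit ⊕ Unit) ⊕ (ι ⊕ ι)) ℝ V := (bW.prod c).map e
      let σ : ((Unit ⊕ Unit) ⊕ (ι ⊕ ι)) ≃ ((Unit ⊕ ι) ⊕ (Unit ⊕ ι)) :=
        Equiv.sumSumSumComm Unit Unit ι ι
      -- orthogonality between W and U
      have hWU : ∀ w ∈ W, ∀ u : U, B w ↑u = 0 := fun w hw u => u.2 w hw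
      have hUW : ∀ w ∈ W, ∀ u : U, B ↑u w = 0 := fun w hw u => hRefl _ _ (hWU w hw u)
      -- values of the assembled basis
      have hval1 : ∀ u : Unit, (d.reindex σ) (Sum.inl (Sum.inl u)) = y := by
        intro u
        rw [Basis.reindex_apply]
        show d (σ.symm (Sum.inl (Sum.inl u))) = y
        have : σ.symm (Sum.inl (Sum.inl u)) = Sum.inl (Sum.inl u) := rfl
        rw [this]
        show e (bW.prod c (Sum.inl (Sum.inl u))) = y
        rw [Basis.prod_apply]
        simp only [Sum.elim_inl, Function.comp_apply, LinearMap.inl_apply]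
        rw [Submodule.coe_prodEquivOfIsCompl']
        simp [hbWl]
      have hval2 : ∀ a : ι, (d.reindex σ) (Sum.inl (Sum.inr a)) = ↑(c (Sum.inl a)) := by
        intro a
        rw [Basis.reindex_apply]
        have : σ.symm (Sum.inl (Sum.inr a)) = Sum.inr (Sum.inl a) := rfl
        rw [this]
        show e (bW.prod c (Sum.inr (Sum.inl a))) = _
        rw [Basis.prod_apply]
        simp only [Sum.elim_inr, Function.comp_apply, LinearMap.inr_apply]
        rw [Submodule.coe_prodEquivOfIsCompl']
        simp
      have hval3 : ∀ u : Unit, (d.reindex σ) (Sum.inr (Sum.inl u)) = x := by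
        intro u
        rw [Basis.reindex_apply]
        have : σ.symm (Sum.inr (Sum.inl u)) = Sum.inl (Sum.inr u) := rfl
        rw [this]
        show e (bW.prod c (Sum.inl (Sum.inr u))) = x
        rw [Basis.prod_apply]
        simp only [Sum.elim_inl, Function.comp_apply, LinearMap.inl_apply]
        rw [Submodule.coe_prodEquivOfIsCompl']
        simp [hbWr]
      have hval4 : ∀ a : ι, (d.reindex σ) (Sum.inr (Sum.inr a)) = ↑(c (Sum.inr a)) := by
        intro a
        rw [Basis.reindex_apply]
        have : σ.symm (Sum.inr (Sum.inr a)) = Sum.inr (Sum.inr a) := rfl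
        rw [this]
        show e (bW.prod c (Sum.inr (Sum.inr a))) = _
        rw [Basis.prod_apply]
        simp only [Sum.elim_inr, Function.comp_apply, LinearMap.inr_apply]
        rw [Submodule.coe_prodEquivOfIsCompl']
        simp
      simp only [LinearMap.BilinForm.restrict_apply, LinearMap.domRestrict_apply] at hc1 hc2 hc3 hc4
      refine ⟨Unit ⊕ ι, inferInstance, d.reindex σ, ?_, ?_, ?_, ?_⟩
      · rintro (u | a) (u' | b)
        · rw [hval1]; exact hAlt y
        · rw [hval1, hval2]; exact hWU y hyW _
        · rw [hval2, hval1]; exact hUW y hyW _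
        · rw [hval2, hval2]; exact hc1 a b
      · rintro (u | a) (u' | b)
        · rw [hval3]; exact hAlt x
        · rw [hval3, hval4]; exact hWU x hxW _
        · rw [hval4, hval3]; exact hUW x hxW _
        · rw [hval4, hval4]; exact hc2 a b
      · rintro (u | a)
        · rw [hval3, hval1]; exact hxy
        · rw [hval4, hval2]; exact hc3 a
      · rintro (u | a) (u' | b) hne
        · exact absurd rfl hne
        · rw [hval3, hval2]; exact hWU x hxW _
        · rw [hval4, hval1]; exact hUW y hyW _
        · rw [hval4, hval2]; exact hc4 a b (by simpa using hne)

theorem stmt_14' (n : ℕ)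
    (Ω : Matrix (Fin n ⊕ Fin n) (Fin n ⊕ Fin n) ℝ)
    (hskew : Ωᵀ = -Ω) (hdet : Ω.det ≠ 0) :
    ∃ Q : Matrix (Fin n ⊕ Fin n) (Fin n ⊕ Fin n) ℝ,
      IsUnit Q.det ∧ Ω = Q * Matrix.fromBlocks 0 (-1) 1 0 * Qᵀ := by
  classical
  set B : BilinForm ℝ (Fin n ⊕ Fin n → ℝ) := Matrix.toBilin' Ω with hB_def
  have hBapp : ∀ v w, B v w = v ⬝ᵥ Ω.mulVec w := fun v w => Matrix.toBilin'_apply' Ω v w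
  have hAlt : B.IsAlt := by
    intro v
    have h1 : v ⬝ᵥ Ω.mulVec v = Ω.vecMul v ⬝ᵥ v := (Matrix.dotProduct_mulVec v Ω v).symm ▸ rfl
    have h2 : Ω.vecMul v = -(Ω.mulVec v) := by
      rw [← Matrix.mulVec_transpose, hskew, Matrix.neg_mulVec]
    have h3 : v ⬝ᵥ Ω.mulVec v = -(v ⬝ᵥ Ω.mulVec v) := by
      calc v ⬝ᵥ Ω.mulVec v = Ω.vecMul v ⬝ᵥ v := by rw [Matrix.dotProduct_mulVec]
        _ = -(Ω.mulVec v) ⬝ᵥ v := by rw [h2]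
        _ = -(Ω.mulVec v ⬝ᵥ v) := by rw [neg_dotProduct]
        _ = -(v ⬝ᵥ Ω.mulVec v) := by rw [dotProduct_comm]
    rw [hBapp]
    linarith
  have hNondeg : B.Nondegenerate :=
    (Matrix.nondegenerate_iff_det_ne_zero.mpr hdet).toBilin'
  obtain ⟨ι, hι, c, hc1, hc2, hc3, hc4⟩ :=
    symp_aux (finrank ℝ (Fin n ⊕ Fin n → ℝ)) (Fin n ⊕ Fin n → ℝ) le_rfl B hAlt hNondeg
  have hcard : Fintype.card ι = n := by
    have h1 := Module.finrank_eq_card_basis c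
    rw [Module.finrank_fintype_fun_eq_card] at h1
    simp only [Fintype.card_sum, Fintype.card_fin] at h1
    omega
  let eqv : ι ≃ Fin n := Fintype.equivFinOfCardEq hcard
  let c' : Basis (Fin n ⊕ Fin n) ℝ (Fin n ⊕ Fin n → ℝ) := c.reindex (Equiv.sumCongr eqv eqv)
  have hc'1 : ∀ a, c' (Sum.inl a) = c (Sum.inl (eqv.symm a)) := fun a => by
    simp [c', Basis.reindex_apply]
  have hc'2 : ∀ a, c' (Sum.inr a) = c (Sum.inr (eqv.symm a)) := fun a => by
    simp [c', Basis.reindex_apply]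
  have hJ : LinearMap.BilinForm.toMatrix c' B = Matrix.fromBlocks 0 (-1) 1 0 := by
    ext i j
    rw [LinearMap.BilinForm.toMatrix_apply]
    rcases i with a | a <;> rcases j with b | b
    · rw [hc'1, hc'1, Matrix.fromBlocks_apply₁₁]
      exact hc1 _ _
    · rw [hc'1, hc'2, Matrix.fromBlocks_apply₁₂]
      have halt := LinearMap.IsAlt.neg hAlt (c (Sum.inr (eqv.symm b))) (c (Sum.inl (eqv.symm a)))
      rw [← halt]
      by_cases hab : a = b
      · subst hab
        rw [hc3]
        simp [Matrix.one_apply]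
      · rw [hc4 _ _ (fun h => hab (by simpa using (congrArg eqv h).symm))]
        simp [Matrix.one_apply, hab]
    · rw [hc'2, hc'1, Matrix.fromBlocks_apply₂₁]
      by_cases hab : a = b
      · subst hab
        rw [hc3]
        simp [Matrix.one_apply]
      · rw [hc4 _ _ (fun h => hab (by simpa using congrArg eqv h))]
        simp [Matrix.one_apply, hab]
    · rw [hc'2, hc'2, Matrix.fromBlocks_apply₂₂]
      exact hc2 _ _
  set b0 : Basis (Fin n ⊕ Fin n) ℝ (Fin n ⊕ Fin n → ℝ) := Pi.basisFun ℝ (Fin n ⊕ Fin n) with hb0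
  have hΩmat : LinearMap.BilinForm.toMatrix b0 B = Ω := by
    rw [hb0, LinearMap.BilinForm.toMatrix_basisFun, hB_def]
    exact LinearMap.BilinForm.toMatrix'_toBilin' Ω
  have key := LinearMap.BilinForm.toMatrix_mul_basis_toMatrix b0 c' B
  rw [hΩmat, hJ] at key
  set P : Matrix (Fin n ⊕ Fin n) (Fin n ⊕ Fin n) ℝ := b0.toMatrix c' with hP
  haveI : Invertible P := b0.invertibleToMatrix c'
  have hPdet : IsUnit P.det := P.isUnit_det_of_invertible
  have hPTdet : IsUnit Pᵀ.det := by rwa [Matrix.det_transpose]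
  refine ⟨(P⁻¹)ᵀ, ?_, ?_⟩
  · rw [Matrix.det_transpose]
    exact P.isUnit_nonsing_inv_det hPdet
  · rw [Matrix.transpose_transpose, Matrix.transpose_nonsing_inv, ← key]
    have h1 : Pᵀ⁻¹ * Pᵀ = 1 := Matrix.nonsing_inv_mul _ hPTdet
    have h2 : P * P⁻¹ = 1 := Matrix.mul_nonsing_inv _ hPdet
    calc Ω = (Pᵀ⁻¹ * Pᵀ) * Ω * (P * P⁻¹) := by rw [h1, h2, Matrix.one_mul, Matrix.mul_one]
      _ = Pᵀ⁻¹ * (Pᵀ * Ω * P) * P⁻¹ := by simp only [Matrix.mul_assoc]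

/-- Every invertible real skew-symmetric `2n × 2n` matrix `Ω` can be written as
`Ω = Q · J · Qᵀ` for some invertible real matrix `Q`. -/
theorem stmt_14 (n : ℕ)
    (Ω : Matrix (Fin n ⊕ Fin n) (Fin n ⊕ Fin n) ℝ)
    (hskew : Ωᵀ = -Ω) (hdet : Ω.det ≠ 0) :
    ∃ Q : Matrix (Fin n ⊕ Fin n) (Fin n ⊕ Fin n) ℝ,
      IsUnit Q.det ∧ Ω = Q * Jmat n * Qᵀ := by
  exact stmt_14' n Ω hskew hdet
end
end

section
/- Let α and ξ be real numbers and let M be the 4×4 real matrix with rows (0, -ξ, 1, 0), (ξ, 0, 0, 1), ((α+1)ξ², 0, 0, -ξ), (0, -ξ², ξ, 0). Then the characteristic polynomial of M equals λ⁴ - (α-2)·ξ²·λ², so the complex eigenvalues of M are 0 (with multiplicity two) and ±√(α-2)·ξ. In particular, if α > 2 and ξ ≠ 0, then M has a positive real eigenvalue. -/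
open Matrix Polynomial

noncomputable section

lemma mem_spectrum_iff_eval {n : Type*} [Fintype n] [DecidableEq n]
    (A : Matrix n n ℂ) (z : ℂ) :
    z ∈ spectrum ℂ A ↔ A.charpoly.eval z = 0 := by
  rw [spectrum.mem_iff]
  have hmap : (evalRingHom z).mapMatrix (charmatrix A) = algebraMap ℂ (Matrix n n ℂ) z - A := by
    ext i j
    by_cases h : i = j <;>
      simp [h, charmatrix_apply, Matrix.map_apply, Matrix.algebraMap_matrix_apply]
  have hdet : A.charpoly.eval z = (algebraMap ℂ (Matrix n n ℂ) z - A).det := by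
    rw [Matrix.charpoly, ← hmap, ← RingHom.map_det]
    rfl
  rw [Matrix.isUnit_iff_isUnit_det, isUnit_iff_ne_zero, not_not, hdet]

set_option maxHeartbeats 1000000 in
/-- The 4×4 matrix from the n-body-type problem has characteristic polynomial
`λ⁴ - (α-2)ξ²λ²`; its complex eigenvalues are `0` (with multiplicity two, when
`(α-2)ξ² ≠ 0`) and the two square roots of `(α-2)ξ²`. In particular, if `α > 2` and
`ξ ≠ 0`, then it has a positive real eigenvalue. -/
theorem stmt_17 (α ξ : ℝ)
    (M : Matrix (Fin 4) (Fin 4) ℝ)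
    (hM : M = !![0, -ξ, 1, 0;
                 ξ, 0, 0, 1;
                 (α + 1) * ξ ^ 2, 0, 0, -ξ;
                 0, -ξ ^ 2, ξ, 0]) :
    M.charpoly = X ^ 4 - C ((α - 2) * ξ ^ 2) * X ^ 2 ∧
    (∀ z : ℂ, z ∈ spectrum ℂ (mapC M) ↔ z = 0 ∨ z ^ 2 = (((α - 2) * ξ ^ 2 : ℝ) : ℂ)) ∧
    ((α - 2) * ξ ^ 2 ≠ 0 →
      (M.charpoly.map (algebraMap ℝ ℂ)).rootMultiplicity 0 = 2) ∧
    (2 < α → ξ ≠ 0 → ∃ r : ℝ, 0 < r ∧ (r : ℂ) ∈ spectrum ℂ (mapC M)) := by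
  have hcp : M.charpoly = X ^ 4 - C ((α - 2) * ξ ^ 2) * X ^ 2 := by
    subst hM
    rw [Matrix.charpoly]
    have h : charmatrix (!![0, -ξ, 1, 0; ξ, 0, 0, 1; (α + 1) * ξ ^ 2, 0, 0, -ξ;
        0, -ξ ^ 2, ξ, 0] : Matrix (Fin 4) (Fin 4) ℝ) =
        !![X, C ξ, -1, 0; -C ξ, X, 0, -1; -C ((α + 1) * ξ ^ 2), 0, X, C ξ;
           0, C (ξ ^ 2), -C ξ, X] := by
      ext i j
      fin_cases i <;> fin_cases j <;>
        simp [charmatrix_apply, Matrix.diagonal]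
    rw [h]
    simp [Matrix.det_succ_row_zero, Fin.sum_univ_succ, Fin.succAbove, _root_.map_mul,
      _root_.map_sub, _root_.map_pow, _root_.map_ofNat]
    ring
  have hC : (mapC M).charpoly = X ^ 4 - C (((α - 2) * ξ ^ 2 : ℝ) : ℂ) * X ^ 2 := by
    rw [mapC, Matrix.charpoly_map, hcp]
    simp
  set c : ℂ := (((α - 2) * ξ ^ 2 : ℝ) : ℂ) with hc
  have hspec : ∀ z : ℂ, z ∈ spectrum ℂ (mapC M) ↔ z = 0 ∨ z ^ 2 = c := by
    intro z
    rw [mem_spectrum_iff_eval, hC]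
    simp only [eval_sub, eval_mul, eval_pow, eval_X, eval_C]
    constructor
    · intro h
      have h2 : z ^ 2 * (z ^ 2 - c) = 0 := by linear_combination h
      rcases mul_eq_zero.mp h2 with h' | h'
      · left; exact pow_eq_zero_iff (by norm_num) |>.mp h'
      · right; exact sub_eq_zero.mp h'
    · rintro (rfl | h)
      · simp
      · linear_combination (z ^ 2 + c) * h - c * h
  refine ⟨hcp, hspec, ?_, ?_⟩
  · intro hne
    have hcne : c ≠ 0 := by
      rw [hc]
      exact_mod_cast Complex.ofReal_ne_zero.mpr hne
    have hmap : M.charpoly.map (algebraMap ℝ ℂ) = X ^ 2 * (X ^ 2 - C c) := by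
      rw [← Matrix.charpoly_map, ← mapC, hC]; ring
    have hq : ((X : ℂ[X]) ^ 2 - C c) ≠ 0 := by
      intro h
      have := congrArg (Polynomial.eval 0) h
      simp at this
      exact hcne this
    have hX2 : rootMultiplicity (0 : ℂ) (X ^ 2) = 2 := by
      have h0 : ((X : ℂ[X]) ^ 2) = (X - C 0) ^ 2 := by simp
      rw [h0, Polynomial.rootMultiplicity_X_sub_C_pow]
    rw [hmap, Polynomial.rootMultiplicity_mul
        (mul_ne_zero (pow_ne_zero 2 Polynomial.X_ne_zero) hq), hX2,
      Polynomial.rootMultiplicity_eq_zero (by simp [Polynomial.IsRoot, hcne])]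
  · intro hα hξ
    have hpos : (0 : ℝ) < (α - 2) * ξ ^ 2 := by
      have h1 : (0 : ℝ) < α - 2 := by linarith
      have h2 : (0 : ℝ) < ξ ^ 2 := by positivity
      exact mul_pos h1 h2
    refine ⟨Real.sqrt ((α - 2) * ξ ^ 2), Real.sqrt_pos.mpr hpos, ?_⟩
    rw [hspec]
    right
    rw [hc]
    have h3 : (Real.sqrt ((α - 2) * ξ ^ 2)) ^ 2 = (α - 2) * ξ ^ 2 :=
      Real.sq_sqrt hpos.le
    calc ((Real.sqrt ((α - 2) * ξ ^ 2) : ℝ) : ℂ) ^ 2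
        = (((Real.sqrt ((α - 2) * ξ ^ 2)) ^ 2 : ℝ) : ℂ) := by push_cast; ring
      _ = (((α - 2) * ξ ^ 2 : ℝ) : ℂ) := by rw [h3]
end
end
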